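/- arXiv:0908.3169 — 5 statements merged into one kernel-verified Lean document; each statement's English description precedes it below -/
import Mathlib

section
/- Let k ≥ 4 be an integer, let G be a k-critical graph, let X ⊆ V(G) have size s, and let T be a DFS spanning tree of G∖X (the graph obtained from G by deleting the vertices of X) rooted at a vertex t₀. Then for every integer j ≥ 1, the number of vertices of T at distance exactly j from t₀ in T is at most (k−1)^s if j = 1, and at most (k−2)^{j−2}·(k−1)^s if j ≥ 2. -/
open SimpleGraph

/-- A graph `G` is `k`-critical if every proper subgraph of `G` is `(k-1)`-colorable,
but `G` itself is not. -/
def IsCritical {V : Type*} (k : ℕ) (G : SimpleGraph V) : Prop :=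
  ¬ G.Colorable (k - 1) ∧ ∀ H : G.Subgraph, H ≠ ⊤ → H.coe.Colorable (k - 1)

namespace Stmt3Aux
open SimpleGraph Walk
set_option linter.unusedSectionVars false
variable {W : Type*} [DecidableEq W] {T : SimpleGraph W}
section Tree
variable (htree : T.IsTree) (t₀ : W)

noncomputable def pth (u : W) : T.Walk t₀ u :=
  (htree.isConnected.exists_path_of_dist t₀ u).choose

lemma pth_isPath (u : W) : (pth htree t₀ u).IsPath :=
  (htree.isConnected.exists_path_of_dist t₀ u).choose_spec.1

lemma length_pth (u : W) : (pth htree t₀ u).length = T.dist t₀ u :=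
  (htree.isConnected.exists_path_of_dist t₀ u).choose_spec.2

lemma eq_pth {u : W} (q : T.Walk t₀ u) (hq : q.IsPath) : q = pth htree t₀ u := by
  have := isAcyclic_iff_path_unique.mp htree.IsAcyclic (⟨q, hq⟩ : T.Path t₀ u)
    ⟨pth htree t₀ u, pth_isPath htree t₀ u⟩
  exact congrArg Subtype.val this

lemma pth_takeUntil {u a : W} (h : a ∈ (pth htree t₀ u).support) :
    (pth htree t₀ u).takeUntil a h = pth htree t₀ a :=
  eq_pth htree t₀ _ ((pth_isPath htree t₀ u).takeUntil h)

lemma dist_le_of_mem_pth {u a : W} (h : a ∈ (pth htree t₀ u).support) :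
    T.dist t₀ a ≤ T.dist t₀ u := by
  rw [← length_pth htree t₀ a, ← length_pth htree t₀ u, ← pth_takeUntil htree t₀ h]
  exact Walk.length_takeUntil_le _ h

lemma support_pth_subset {u a : W} (h : a ∈ (pth htree t₀ u).support) :
    (pth htree t₀ a).support ⊆ (pth htree t₀ u).support := by
  rw [← pth_takeUntil htree t₀ h]
  exact Walk.support_takeUntil_subset _ h

lemma eq_of_mem_pth_dist {u a : W} (h : a ∈ (pth htree t₀ u).support)
    (hd : T.dist t₀ a = T.dist t₀ u) : a = u := by
  have hspec := Walk.take_spec (pth htree t₀ u) h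
  have hlen := congrArg Walk.length hspec
  rw [Walk.length_append] at hlen
  rw [pth_takeUntil htree t₀ h] at hspec hlen
  have h0 : ((pth htree t₀ u).dropUntil a h).length = 0 := by
    rw [length_pth, length_pth, hd] at hlen; omega
  have hnil := (Walk.nil_iff_length_eq).mpr h0
  exact hnil.eq

lemma compa {u a b : W} (ha : a ∈ (pth htree t₀ u).support)
    (hb : b ∈ (pth htree t₀ u).support) :
    a ∈ (pth htree t₀ b).support ∨ b ∈ (pth htree t₀ a).support := by
  set p := pth htree t₀ u with hp
  by_cases hab : a ∈ (p.takeUntil b hb).support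
  · left; rwa [pth_takeUntil htree t₀ hb] at hab
  · right
    have hsplit := Walk.take_spec p hb
    have ha' : a ∈ (p.dropUntil b hb).support := by
      have h2 := ha
      rw [← hsplit, Walk.mem_support_append_iff] at h2
      tauto
    set q : T.Walk t₀ a := (p.takeUntil b hb).append ((p.dropUntil b hb).takeUntil a ha')
      with hq
    have hpn : p.support.Nodup := (pth_isPath htree t₀ u).support_nodup
    have hSplitNodup : ((p.takeUntil b hb).support ++ ((p.dropUntil b hb).support.tail)).Nodup := by
      rw [← Walk.support_append, hsplit]; exact hpn
    rw [List.nodup_append] at hSplitNodup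
    have hRpath : ((p.dropUntil b hb).takeUntil a ha').IsPath :=
      ((pth_isPath htree t₀ u).dropUntil hb).takeUntil ha'
    have hRnodup : ((p.dropUntil b hb).takeUntil a ha').support.Nodup := hRpath.support_nodup
    have hRtail_sub : ((p.dropUntil b hb).takeUntil a ha').support.tail ⊆
        (p.dropUntil b hb).support.tail := by
      intro x hx
      have hxR : x ∈ ((p.dropUntil b hb).takeUntil a ha').support := List.mem_of_mem_tail hx
      have hxb : x ≠ b := by
        intro hxb
        have hc := Walk.support_eq_cons ((p.dropUntil b hb).takeUntil a ha')
        rw [hc] at hRnodup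
        rw [hxb] at hx
        exact (List.nodup_cons.mp hRnodup).1 hx
      have hxD : x ∈ (p.dropUntil b hb).support := Walk.support_takeUntil_subset _ ha' hxR
      rw [Walk.support_eq_cons (p.dropUntil b hb)] at hxD
      rcases List.mem_cons.mp hxD with h | h
      · exact absurd h hxb
      · exact h
    have hqpath : q.IsPath := by
      rw [Walk.isPath_def, hq, Walk.support_append, List.nodup_append]
      refine ⟨hSplitNodup.1, ?_, ?_⟩
      · have := hRnodup
        rw [Walk.support_eq_cons ((p.dropUntil b hb).takeUntil a ha')] at this
        exact (List.nodup_cons.mp this).2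
      · exact fun x hx y hy => hSplitNodup.2.2 x hx y (hRtail_sub hy)
    have hqp : q = pth htree t₀ a := eq_pth htree t₀ q hqpath
    have hbq : b ∈ q.support := by
      rw [hq, Walk.mem_support_append_iff]; left; exact Walk.end_mem_support _
    rwa [hqp] at hbq

include htree in
lemma dist_getVert_le {x y : W} (q : T.Walk x y) (i : ℕ) : T.dist x (q.getVert i) ≤ i := by
  induction i with
  | zero => simp [Walk.getVert_zero]
  | succ n ih =>
    by_cases h : n < q.length
    · have hadj := q.adj_getVert_succ h
      have htr := htree.isConnected.dist_triangle (u := x) (v := q.getVert n)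
        (w := q.getVert (n + 1))
      have h1 : T.dist (q.getVert n) (q.getVert (n+1)) = 1 := dist_eq_one_iff_adj.mpr hadj
      omega
    · have h1 : q.getVert (n+1) = q.getVert n := by
        rw [q.getVert_of_length_le (by omega), q.getVert_of_length_le (by omega)]
      rw [h1]; exact le_trans ih (by omega)

include htree in
lemma dist_getVert_to_end {x y : W} (q : T.Walk x y) :
    ∀ m i, q.length - i ≤ m → T.dist (q.getVert i) y ≤ q.length - i := by
  intro m
  induction m with
  | zero =>
    intro i h
    have hle : q.length ≤ i := by omega
    rw [q.getVert_of_length_le hle]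
    simp [SimpleGraph.dist_self]
  | succ n ih =>
    intro i h
    by_cases hle : q.length ≤ i
    · rw [q.getVert_of_length_le hle]; simp [SimpleGraph.dist_self]
    · have hlt : i < q.length := by omega
      have hadj := q.adj_getVert_succ hlt
      have htr := htree.isConnected.dist_triangle (u := q.getVert i) (v := q.getVert (i+1))
        (w := y)
      have h1 : T.dist (q.getVert i) (q.getVert (i+1)) = 1 := dist_eq_one_iff_adj.mpr hadj
      have h2 := ih (i+1) (by omega)
      omega

lemma dist_getVert_pth {u : W} {i : ℕ} (hi : i ≤ (pth htree t₀ u).length) :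
    T.dist t₀ ((pth htree t₀ u).getVert i) = i := by
  set p := pth htree t₀ u with hp
  have h1 := dist_getVert_le htree p i
  have h2 := dist_getVert_to_end htree p (p.length - i) i (le_refl _)
  have h3 := htree.isConnected.dist_triangle (u := t₀) (v := p.getVert i) (w := u)
  have h4 : p.length = T.dist t₀ u := length_pth htree t₀ u
  omega

lemma getVert_mem_pth (u : W) {i : ℕ} (hi : i ≤ (pth htree t₀ u).length) :
    (pth htree t₀ u).getVert i ∈ (pth htree t₀ u).support :=
  Walk.mem_support_iff_exists_getVert.mpr ⟨i, rfl, hi⟩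

/-- The parent of a vertex in the tree. -/
noncomputable def par (u : W) : W := (pth htree t₀ u).getVert (T.dist t₀ u - 1)

lemma dist_par {u : W} (h : 1 ≤ T.dist t₀ u) : T.dist t₀ (par htree t₀ u) = T.dist t₀ u - 1 :=
  dist_getVert_pth htree t₀ (by rw [length_pth]; omega)

lemma par_mem_pth (u : W) : par htree t₀ u ∈ (pth htree t₀ u).support :=
  getVert_mem_pth htree t₀ u (by rw [length_pth]; omega)

lemma adj_par {u : W} (h : 1 ≤ T.dist t₀ u) : T.Adj (par htree t₀ u) u := by
  have hlt : T.dist t₀ u - 1 < (pth htree t₀ u).length := by rw [length_pth]; omega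
  have hadj := (pth htree t₀ u).adj_getVert_succ hlt
  have he : T.dist t₀ u - 1 + 1 = (pth htree t₀ u).length := by rw [length_pth]; omega
  rw [he, Walk.getVert_length] at hadj
  exact hadj

lemma anc_eq_of_dist_eq {u a b : W} (ha : a ∈ (pth htree t₀ u).support)
    (hb : b ∈ (pth htree t₀ u).support) (h : T.dist t₀ a = T.dist t₀ b) : a = b := by
  rcases compa htree t₀ ha hb with h1 | h1
  · exact eq_of_mem_pth_dist htree t₀ h1 h
  · exact (eq_of_mem_pth_dist htree t₀ h1 h.symm).symm

lemma mem_pth_par {u a : W} (hd : 1 ≤ T.dist t₀ u) :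
    (a ∈ (pth htree t₀ u).support ∧ a ≠ u) ↔ a ∈ (pth htree t₀ (par htree t₀ u)).support := by
  constructor
  · rintro ⟨ha, hne⟩
    have hpar := par_mem_pth htree t₀ u
    have hda : T.dist t₀ a ≠ T.dist t₀ u := fun hh => hne (eq_of_mem_pth_dist htree t₀ ha hh)
    have hda2 : T.dist t₀ a ≤ T.dist t₀ u := dist_le_of_mem_pth htree t₀ ha
    rcases compa htree t₀ ha hpar with h1 | h1
    · exact h1
    · have hdz : T.dist t₀ (par htree t₀ u) ≤ T.dist t₀ a := dist_le_of_mem_pth htree t₀ h1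
      have : T.dist t₀ (par htree t₀ u) = T.dist t₀ a := by
        rw [dist_par htree t₀ hd] at hdz ⊢; omega
      have := eq_of_mem_pth_dist htree t₀ h1 this
      rw [this]
      exact Walk.end_mem_support _
  · intro ha
    have h1 : a ∈ (pth htree t₀ u).support := support_pth_subset htree t₀ (par_mem_pth htree t₀ u) ha
    have h2 : T.dist t₀ a ≤ T.dist t₀ (par htree t₀ u) := dist_le_of_mem_pth htree t₀ ha
    rw [dist_par htree t₀ hd] at h2
    refine ⟨h1, fun hne => ?_⟩
    subst hne
    omega

/-- The depth-1 ancestor. -/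
noncomputable def anc1 (u : W) : W := (pth htree t₀ u).getVert 1

lemma dist_anc1 {u : W} (h : 1 ≤ T.dist t₀ u) : T.dist t₀ (anc1 htree t₀ u) = 1 :=
  dist_getVert_pth htree t₀ (by rw [length_pth]; omega)

lemma anc1_mem_pth (u : W) (h : 1 ≤ T.dist t₀ u) :
    anc1 htree t₀ u ∈ (pth htree t₀ u).support :=
  getVert_mem_pth htree t₀ u (by rw [length_pth]; omega)

lemma anc1_eq_of_mem {u a : W} (ha : a ∈ (pth htree t₀ u).support)
    (h1 : T.dist t₀ a = 1) (hd : 1 ≤ T.dist t₀ u) : anc1 htree t₀ u = a :=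
  anc_eq_of_dist_eq htree t₀ (anc1_mem_pth htree t₀ u hd) ha (by rw [dist_anc1 htree t₀ hd, h1])

end Tree

section Coloring

variable {V : Type} [Fintype V] [DecidableEq V]

/-- From criticality: a proper partial coloring avoiding any nonempty set. -/
lemma exists_coloring_off {k : ℕ} (hk : 4 ≤ k) {G : SimpleGraph V}
    (hG : IsCritical k G) (S : Set V) (hS : S.Nonempty) :
    ∃ f : V → Fin (k - 1), ∀ a b : V, G.Adj a b → a ∉ S → b ∉ S → f a ≠ f b := by
  classical
  obtain ⟨s₀, hs₀⟩ := hS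
  set H : G.Subgraph :=
    { verts := Sᶜ
      Adj := fun a b => G.Adj a b ∧ a ∉ S ∧ b ∉ S
      adj_sub := fun h => h.1
      edge_vert := fun h => h.2.1
      symm := ⟨fun a b h => ⟨h.1.symm, h.2.2, h.2.1⟩⟩ } with hH
  have hne : H ≠ ⊤ := by
    intro htop
    have : H.verts = Set.univ := by rw [htop]; exact SimpleGraph.Subgraph.verts_top
    have : s₀ ∈ H.verts := by rw [this]; trivial
    exact this hs₀
  obtain ⟨C⟩ := hG.2 H hne
  refine ⟨fun v => if h : v ∈ H.verts then C ⟨v, h⟩ else ⟨0, by omega⟩, ?_⟩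
  intro a b hab ha hb
  have hadj : H.coe.Adj ⟨a, ha⟩ ⟨b, hb⟩ := ⟨hab, ha, hb⟩
  have := C.valid hadj
  dsimp only
  rw [dif_pos (show a ∈ H.verts from ha), dif_pos (show b ∈ H.verts from hb)]
  exact this

/-- We can permute two prescribed (distinct) values of a function to two given targets. -/
lemma exists_perm_pair {n : ℕ} (a b c d : Fin n) (hab : a ≠ b) (hcd : c ≠ d) :
    ∃ σ : Equiv.Perm (Fin n), σ a = c ∧ σ b = d := by
  classical
  set σ₁ := Equiv.swap a c with h1
  have hy : σ₁ b ≠ c := by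
    intro h
    have : σ₁ b = σ₁ a := by rw [h, Equiv.swap_apply_left]
    exact hab (σ₁.injective this).symm
  set σ₂ := Equiv.swap (σ₁ b) d with h2
  refine ⟨σ₁.trans σ₂, ?_, ?_⟩
  · have : σ₂ c = c := Equiv.swap_apply_of_ne_of_ne (Ne.symm hy) hcd
    simp [Equiv.trans_apply, Equiv.swap_apply_left, this, h1]
  · exact Equiv.swap_apply_left (σ₁ b) d

lemma exists_perm_single {n : ℕ} (a c : Fin n) :
    ∃ σ : Equiv.Perm (Fin n), σ a = c :=
  ⟨Equiv.swap a c, Equiv.swap_apply_left a c⟩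

end Coloring

section Main

variable {V : Type} [Fintype V] [DecidableEq V] {X : Finset V}
  {T : SimpleGraph {x : V // x ∉ X}}

/-- The set of (values of) descendants of `u` in the tree. -/
def descV (htree : T.IsTree) (t₀ u : {x : V // x ∉ X}) : Set V :=
  {v | ∃ w : {x : V // x ∉ X}, w.1 = v ∧ u ∈ (pth htree t₀ w).support}

/-- The boundary of the subtree at `u`: `X` together with the strict ancestors of `u`. -/
def bdV (htree : T.IsTree) (t₀ u : {x : V // x ∉ X}) : Set V :=
  ↑X ∪ {v | ∃ a : {x : V // x ∉ X}, a.1 = v ∧ a ∈ (pth htree t₀ u).support ∧ a ≠ u}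

variable (k : ℕ)

/-- Properness off the descendants of `u`. -/
def isPr (G : SimpleGraph V) (htree : T.IsTree) (t₀ u : {x : V // x ∉ X})
    (f : V → Fin (k - 1)) : Prop :=
  ∀ a b : V, G.Adj a b → a ∉ descV htree t₀ u → b ∉ descV htree t₀ u → f a ≠ f b

variable (hk : 4 ≤ k)

/-- Normalization of colors at the root and the depth-one ancestor. -/
def isNorm (htree : T.IsTree) (t₀ u : {x : V // x ∉ X}) (f : V → Fin (k - 1)) : Prop :=
  f t₀.1 = ⟨0, by omega⟩ ∧ (2 ≤ T.dist t₀ u → f (anc1 htree t₀ u).1 = ⟨1, by omega⟩)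

open scoped Classical in
/-- Restriction of a coloring to a set (junk value elsewhere). -/
noncomputable def rst (S : Set V) (f : V → Fin (k - 1)) : V → Fin (k - 1) :=
  fun v => if v ∈ S then f v else ⟨0, by omega⟩

open scoped Classical in
/-- The set of achievable normalized boundary colorings at `u`. -/
noncomputable def Aset (G : SimpleGraph V) (htree : T.IsTree) (t₀ u : {x : V // x ∉ X}) :
    Finset (V → Fin (k - 1)) :=
  Finset.univ.filter (fun θ => ∃ f : V → Fin (k - 1),
    isPr k G htree t₀ u f ∧ isNorm k hk htree t₀ u f ∧ θ = rst k hk (bdV htree t₀ u) f)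

open scoped Classical in
lemma mem_Aset_iff {G : SimpleGraph V} {htree : T.IsTree} {t₀ u : {x : V // x ∉ X}}
    {θ : V → Fin (k - 1)} :
    θ ∈ Aset k hk G htree t₀ u ↔ ∃ f : V → Fin (k - 1),
      isPr k G htree t₀ u f ∧ isNorm k hk htree t₀ u f ∧ θ = rst k hk (bdV htree t₀ u) f := by
  simp [Aset]

lemma mem_descV {htree : T.IsTree} {t₀ u w : {x : V // x ∉ X}}
    (h : u ∈ (pth htree t₀ w).support) : w.1 ∈ descV htree t₀ u := ⟨w, rfl, h⟩

lemma self_mem_descV (htree : T.IsTree) (t₀ u : {x : V // x ∉ X}) :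
    u.1 ∈ descV htree t₀ u := mem_descV (Walk.end_mem_support _)

lemma descV_not_X {htree : T.IsTree} {t₀ u : {x : V // x ∉ X}} {v : V}
    (h : v ∈ descV htree t₀ u) : v ∉ X := by
  obtain ⟨w, rfl, _⟩ := h; exact w.2

lemma val_not_mem_descV {htree : T.IsTree} {t₀ u a : {x : V // x ∉ X}}
    (ha : a ∈ (pth htree t₀ u).support) (hne : a ≠ u) : a.1 ∉ descV htree t₀ u := by
  rintro ⟨w, hw, hww⟩
  have hwa : w = a := Subtype.ext hw
  subst hwa
  have h1 : T.dist t₀ u ≤ T.dist t₀ w := dist_le_of_mem_pth htree t₀ hww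
  have h2 : T.dist t₀ w ≤ T.dist t₀ u := dist_le_of_mem_pth htree t₀ ha
  exact hne (eq_of_mem_pth_dist htree t₀ hww (by omega)).symm

lemma not_mem_descV_of_dist_lt {htree : T.IsTree} {t₀ u b : {x : V // x ∉ X}}
    (h : T.dist t₀ b < T.dist t₀ u) : b.1 ∉ descV htree t₀ u := by
  rintro ⟨w, hw, hww⟩
  have hwb : w = b := Subtype.ext hw
  subst hwb
  have := dist_le_of_mem_pth htree t₀ hww
  omega

lemma descV_mono {htree : T.IsTree} {t₀ u z : {x : V // x ∉ X}}
    (hz : z ∈ (pth htree t₀ u).support) :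
    descV htree t₀ u ⊆ descV htree t₀ z := by
  rintro v ⟨w, rfl, hw⟩
  exact ⟨w, rfl, support_pth_subset htree t₀ hw hz⟩

lemma closure_lem {G : SimpleGraph V} (htree : T.IsTree) (t₀ : {x : V // x ∉ X})
    (hdfs : ∀ x y : {x : V // x ∉ X}, (G.induce {x : V | x ∉ X}).Adj x y →
      (∃ p : T.Walk t₀ y, p.IsPath ∧ x ∈ p.support) ∨
      (∃ p : T.Walk t₀ x, p.IsPath ∧ y ∈ p.support))
    {u w w' : {x : V // x ∉ X}} (hw : u ∈ (pth htree t₀ w).support)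
    (hadj : G.Adj w.1 w'.1) :
    u ∈ (pth htree t₀ w').support ∨ (w' ∈ (pth htree t₀ u).support ∧ w' ≠ u) := by
  have hadj' : (G.induce {x : V | x ∉ X}).Adj w w' := hadj
  rcases hdfs w w' hadj' with ⟨p, hp, hmem⟩ | ⟨p, hp, hmem⟩
  · rw [eq_pth htree t₀ p hp] at hmem
    exact Or.inl (support_pth_subset htree t₀ hmem hw)
  · rw [eq_pth htree t₀ p hp] at hmem
    rcases compa htree t₀ hw hmem with h | h
    · exact Or.inl h
    · by_cases hne : w' = u
      · subst hne; exact Or.inl (Walk.end_mem_support _)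
      · exact Or.inr ⟨h, hne⟩

lemma descV_pair_disjoint {htree : T.IsTree} {t₀ u u' : {x : V // x ∉ X}}
    (hne : u ≠ u') (hd : T.dist t₀ u = T.dist t₀ u') {a : V}
    (ha : a ∈ descV htree t₀ u) : a ∉ descV htree t₀ u' := by
  rintro ⟨w', hw', hww'⟩
  obtain ⟨w, hw, hww⟩ := ha
  have : w' = w := Subtype.ext (by rw [hw, hw'])
  subst this
  rcases compa htree t₀ hww hww' with h | h
  · exact hne (eq_of_mem_pth_dist htree t₀ h hd)
  · exact hne (eq_of_mem_pth_dist htree t₀ h hd.symm).symm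

lemma bdV_not_descV {htree : T.IsTree} {t₀ u u' : {x : V // x ∉ X}}
    (hd : T.dist t₀ u ≤ T.dist t₀ u') {b : V}
    (hb : b ∈ bdV htree t₀ u) : b ∉ descV htree t₀ u' := by
  rcases hb with hb | ⟨a, rfl, ha, hne⟩
  · exact fun hc => descV_not_X hc hb
  · have h1 : T.dist t₀ a ≤ T.dist t₀ u := dist_le_of_mem_pth htree t₀ ha
    have h2 : T.dist t₀ a ≠ T.dist t₀ u := fun hh => hne (eq_of_mem_pth_dist htree t₀ ha hh)
    exact not_mem_descV_of_dist_lt (by omega)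

lemma mem_bdV_of_adj {G : SimpleGraph V} {htree : T.IsTree} {t₀ : {x : V // x ∉ X}}
    (hdfs : ∀ x y : {x : V // x ∉ X}, (G.induce {x : V | x ∉ X}).Adj x y →
      (∃ p : T.Walk t₀ y, p.IsPath ∧ x ∈ p.support) ∨
      (∃ p : T.Walk t₀ x, p.IsPath ∧ y ∈ p.support))
    {u : {x : V // x ∉ X}} {a b : V} (ha : a ∈ descV htree t₀ u)
    (hb : b ∉ descV htree t₀ u) (hab : G.Adj a b) : b ∈ bdV htree t₀ u := by
  obtain ⟨w, rfl, hw⟩ := ha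
  by_cases hbX : b ∈ X
  · exact Or.inl hbX
  · set w' : {x : V // x ∉ X} := ⟨b, hbX⟩ with hw'
    have hadj : G.Adj w.1 w'.1 := hab
    rcases closure_lem htree t₀ hdfs hw hadj with h | ⟨h, hne⟩
    · exact absurd (mem_descV h) hb
    · exact Or.inr ⟨w', rfl, h, hne⟩

lemma no_patch {G : SimpleGraph V} (hG : IsCritical k G) {htree : T.IsTree}
    {t₀ : {x : V // x ∉ X}}
    (hdfs : ∀ x y : {x : V // x ∉ X}, (G.induce {x : V | x ∉ X}).Adj x y →
      (∃ p : T.Walk t₀ y, p.IsPath ∧ x ∈ p.support) ∨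
      (∃ p : T.Walk t₀ x, p.IsPath ∧ y ∈ p.support))
    {u u' : {x : V // x ∉ X}} (hne : u ≠ u') (hd : T.dist t₀ u = T.dist t₀ u')
    {f g : V → Fin (k - 1)} (hf : isPr k G htree t₀ u f) (hg : isPr k G htree t₀ u' g)
    (hagree : ∀ v ∈ bdV htree t₀ u, f v = g v)
    (hbd : bdV htree t₀ u = bdV htree t₀ u') : False := by
  classical
  set h : V → Fin (k - 1) := fun v => if v ∈ descV htree t₀ u then g v else f v with hh
  have hcol : ∀ a b : V, G.Adj a b → h a ≠ h b := by
    intro a b hab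
    by_cases ha : a ∈ descV htree t₀ u <;> by_cases hb : b ∈ descV htree t₀ u
    · simp only [hh, ha, hb, if_pos]
      exact hg a b hab (descV_pair_disjoint hne hd ha) (descV_pair_disjoint hne hd hb)
    · have hbbd : b ∈ bdV htree t₀ u := mem_bdV_of_adj hdfs ha hb hab
      have hfb : f b = g b := hagree b hbbd
      simp only [hh, ha, hb, if_pos, if_neg, if_true, if_false]
      rw [hfb]
      exact hg a b hab (descV_pair_disjoint hne hd ha)
        (bdV_not_descV le_rfl (hbd ▸ hbbd))
    · have habd : a ∈ bdV htree t₀ u := mem_bdV_of_adj hdfs hb ha hab.symm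
      have hfa : f a = g a := hagree a habd
      simp only [hh, ha, hb, if_pos, if_neg, if_true, if_false]
      rw [hfa]
      exact hg a b hab (bdV_not_descV le_rfl (hbd ▸ habd))
        (descV_pair_disjoint hne hd hb)
    · simp only [hh, ha, hb, if_neg, if_false]
      exact hf a b hab ha hb
  exact hG.1 ⟨SimpleGraph.Coloring.mk h (fun hadj => hcol _ _ hadj)⟩

lemma rst_apply_mem {S : Set V} {f : V → Fin (k - 1)} {v : V} (hv : v ∈ S) :
    rst k hk S f v = f v := by simp [rst, hv]

lemma rst_apply_not_mem {S : Set V} {f : V → Fin (k - 1)} {v : V} (hv : v ∉ S) :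
    rst k hk S f v = ⟨0, by omega⟩ := by simp [rst, hv]

lemma bdV_eq_par {htree : T.IsTree} {t₀ u : {x : V // x ∉ X}} (hd : 1 ≤ T.dist t₀ u) :
    bdV htree t₀ u =
      ↑X ∪ {v | ∃ a : {x : V // x ∉ X}, a.1 = v ∧
        a ∈ (pth htree t₀ (par htree t₀ u)).support} := by
  ext v
  simp only [bdV, Set.mem_union, Set.mem_setOf_eq]
  constructor
  · rintro (h | ⟨a, rfl, ha, hne⟩)
    · exact Or.inl h
    · exact Or.inr ⟨a, rfl, (mem_pth_par htree t₀ hd).mp ⟨ha, hne⟩⟩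
  · rintro (h | ⟨a, rfl, ha⟩)
    · exact Or.inl h
    · have := (mem_pth_par htree t₀ hd).mpr ha
      exact Or.inr ⟨a, rfl, this.1, this.2⟩

lemma aset_disjoint {G : SimpleGraph V} (hG : IsCritical k G) {htree : T.IsTree}
    {t₀ : {x : V // x ∉ X}}
    (hdfs : ∀ x y : {x : V // x ∉ X}, (G.induce {x : V | x ∉ X}).Adj x y →
      (∃ p : T.Walk t₀ y, p.IsPath ∧ x ∈ p.support) ∨
      (∃ p : T.Walk t₀ x, p.IsPath ∧ y ∈ p.support))
    {u u' : {x : V // x ∉ X}} (hd1 : 1 ≤ T.dist t₀ u) (hd1' : 1 ≤ T.dist t₀ u')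
    (hpar : par htree t₀ u = par htree t₀ u') (hne : u ≠ u') :
    Disjoint (Aset k hk G htree t₀ u) (Aset k hk G htree t₀ u') := by
  rw [Finset.disjoint_left]
  intro θ h1 h2
  obtain ⟨f, hf, hnf, rfl⟩ := (mem_Aset_iff k hk).mp h1
  obtain ⟨g, hg, hng, hθ⟩ := (mem_Aset_iff k hk).mp h2
  have hdp := dist_par htree t₀ hd1
  have hdp' := dist_par htree t₀ hd1'
  rw [hpar] at hdp
  have hd : T.dist t₀ u = T.dist t₀ u' := by omega
  have hbd : bdV htree t₀ u = bdV htree t₀ u' := by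
    rw [bdV_eq_par hd1, bdV_eq_par hd1', hpar]
  refine no_patch k hG hdfs hne hd hf hg ?_ hbd
  intro v hv
  have e1 : rst k hk (bdV htree t₀ u) f v = f v := rst_apply_mem k hk hv
  have e2 : rst k hk (bdV htree t₀ u') g v = g v := rst_apply_mem k hk (hbd ▸ hv)
  rw [← e1, hθ, e2]

lemma aset_nonempty {G : SimpleGraph V} (hG : IsCritical k G) {htree : T.IsTree}
    {t₀ : {x : V // x ∉ X}} (hsub : T ≤ G.induce {x : V | x ∉ X})
    {u : {x : V // x ∉ X}} (hd : 1 ≤ T.dist t₀ u) :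
    (Aset k hk G htree t₀ u).Nonempty := by
  obtain ⟨f, hf⟩ := exists_coloring_off hk hG (descV htree t₀ u)
    ⟨u.1, self_mem_descV htree t₀ u⟩
  have ht₀u : t₀ ≠ u := by
    intro h
    rw [← h] at hd
    simp [SimpleGraph.dist_self] at hd
  have ht₀mem : t₀ ∈ (pth htree t₀ u).support := Walk.start_mem_support _
  have ht₀d : t₀.1 ∉ descV htree t₀ u := val_not_mem_descV ht₀mem ht₀u
  by_cases h2 : 2 ≤ T.dist t₀ u
  · have hlen : 0 < (pth htree t₀ u).length := by rw [length_pth]; omega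
    have hadjT : T.Adj t₀ (anc1 htree t₀ u) := by
      have := (pth htree t₀ u).adj_getVert_succ hlen
      rwa [Walk.getVert_zero] at this
    have hadjG : G.Adj t₀.1 (anc1 htree t₀ u).1 := hsub hadjT
    have ha1mem := anc1_mem_pth htree t₀ u hd
    have ha1ne : anc1 htree t₀ u ≠ u := by
      intro h
      have := dist_anc1 htree t₀ hd
      rw [h] at this
      omega
    have ha1d : (anc1 htree t₀ u).1 ∉ descV htree t₀ u := val_not_mem_descV ha1mem ha1ne
    have hne01 : f t₀.1 ≠ f (anc1 htree t₀ u).1 := hf _ _ hadjG ht₀d ha1d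
    have hc01 : (⟨0, by omega⟩ : Fin (k - 1)) ≠ ⟨1, by omega⟩ := by
      intro h
      have := congrArg Fin.val h
      simp at this
    obtain ⟨σ, hσ0, hσ1⟩ := exists_perm_pair (f t₀.1) (f (anc1 htree t₀ u).1)
      ⟨0, by omega⟩ ⟨1, by omega⟩ hne01 hc01
    refine ⟨rst k hk (bdV htree t₀ u) (σ ∘ f), (mem_Aset_iff k hk).mpr ⟨σ ∘ f, ?_, ?_, rfl⟩⟩
    · intro a b hab ha hb
      exact fun hcon => hf a b hab ha hb (σ.injective hcon)
    · exact ⟨hσ0, fun _ => hσ1⟩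
  · obtain ⟨σ, hσ0⟩ := exists_perm_single (f t₀.1) (⟨0, by omega⟩ : Fin (k - 1))
    refine ⟨rst k hk (bdV htree t₀ u) (σ ∘ f), (mem_Aset_iff k hk).mpr ⟨σ ∘ f, ?_, ?_, rfl⟩⟩
    · intro a b hab ha hb
      exact fun hcon => hf a b hab ha hb (σ.injective hcon)
    · exact ⟨hσ0, fun h => absurd h h2⟩

lemma pth_self (htree : T.IsTree) (t₀ : {x : V // x ∉ X}) :
    pth htree t₀ t₀ = Walk.nil := (eq_pth htree t₀ Walk.nil Walk.IsPath.nil).symm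

lemma par_of_dist_one {htree : T.IsTree} {t₀ u : {x : V // x ∉ X}}
    (h : T.dist t₀ u = 1) : par htree t₀ u = t₀ := by
  simp [par, h, Walk.getVert_zero]

lemma bdV_of_dist_one {htree : T.IsTree} {t₀ u : {x : V // x ∉ X}}
    (h : T.dist t₀ u = 1) : bdV htree t₀ u = ↑X ∪ {t₀.1} := by
  rw [bdV_eq_par (by omega), par_of_dist_one h, pth_self]
  ext v
  simp only [Set.mem_union, Set.mem_setOf_eq, Walk.support_nil, List.mem_singleton]
  constructor
  · rintro (h | ⟨a, rfl, rfl⟩)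
    · exact Or.inl h
    · exact Or.inr rfl
  · rintro (h | h)
    · exact Or.inl h
    · exact Or.inr ⟨t₀, h.symm, rfl⟩

lemma bdV_child {htree : T.IsTree} {t₀ u z : {x : V // x ∉ X}}
    (hd : 1 ≤ T.dist t₀ u) (hpar : par htree t₀ u = z) :
    bdV htree t₀ u = bdV htree t₀ z ∪ {z.1} := by
  rw [bdV_eq_par hd, hpar]
  ext v
  simp only [bdV, Set.mem_union, Set.mem_setOf_eq, Set.mem_singleton_iff]
  constructor
  · rintro (h | ⟨a, rfl, ha⟩)
    · exact Or.inl (Or.inl h)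
    · by_cases haz : a = z
      · subst haz; exact Or.inr rfl
      · exact Or.inl (Or.inr ⟨a, rfl, ha, haz⟩)
  · rintro ((h | ⟨a, rfl, ha, _⟩) | h)
    · exact Or.inl h
    · exact Or.inr ⟨a, rfl, ha⟩
    · exact Or.inr ⟨z, h.symm, Walk.end_mem_support _⟩

lemma z_not_mem_bdV {htree : T.IsTree} {t₀ z : {x : V // x ∉ X}} :
    z.1 ∉ bdV htree t₀ z := by
  rintro (h | ⟨a, ha, _, hne⟩)
  · exact z.2 h
  · exact hne (Subtype.ext ha)

lemma rst_rst {S S' : Set V} (h : S ⊆ S') (f : V → Fin (k - 1)) :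
    rst k hk S (rst k hk S' f) = rst k hk S f := by
  funext v
  by_cases hv : v ∈ S
  · rw [rst_apply_mem k hk hv, rst_apply_mem k hk hv, rst_apply_mem k hk (h hv)]
  · rw [rst_apply_not_mem k hk hv, rst_apply_not_mem k hk hv]

lemma bdV_subset_child {htree : T.IsTree} {t₀ u z : {x : V // x ∉ X}}
    (hd : 1 ≤ T.dist t₀ u) (hpar : par htree t₀ u = z) :
    bdV htree t₀ z ⊆ bdV htree t₀ u := by
  rw [bdV_child hd hpar]; exact Set.subset_union_left

/-- The restriction map sends the boundary colorings of a child into those of its parent. -/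
lemma rst_mem_Aset_par {G : SimpleGraph V} {htree : T.IsTree} {t₀ u z : {x : V // x ∉ X}}
    (hdz : 1 ≤ T.dist t₀ z) (hdu : T.dist t₀ u = T.dist t₀ z + 1)
    (hpar : par htree t₀ u = z) {θ : V → Fin (k - 1)} (hθ : θ ∈ Aset k hk G htree t₀ u) :
    rst k hk (bdV htree t₀ z) θ ∈ Aset k hk G htree t₀ z := by
  obtain ⟨f, hf, hnf, rfl⟩ := (mem_Aset_iff k hk).mp hθ
  have hzmem : z ∈ (pth htree t₀ u).support := hpar ▸ par_mem_pth htree t₀ u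
  rw [rst_rst k hk (bdV_subset_child (by omega) hpar) f]
  refine (mem_Aset_iff k hk).mpr ⟨f, ?_, ?_, rfl⟩
  · intro a b hab ha hb
    exact hf a b hab (fun hc => ha (descV_mono hzmem hc)) (fun hc => hb (descV_mono hzmem hc))
  · refine ⟨hnf.1, fun h2 => ?_⟩
    have ha1 : anc1 htree t₀ u = anc1 htree t₀ z := by
      refine anc1_eq_of_mem htree t₀ ?_ (dist_anc1 htree t₀ hdz) (by omega)
      exact support_pth_subset htree t₀ hzmem (anc1_mem_pth htree t₀ z hdz)
    have := hnf.2 (by omega)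
    rwa [ha1] at this

/-- Every element of the child's `Aset` is an update of its restriction at `z`. -/
lemma aset_update {G : SimpleGraph V} {htree : T.IsTree} {t₀ u z : {x : V // x ∉ X}}
    (hdu : 1 ≤ T.dist t₀ u) (hpar : par htree t₀ u = z) {θ : V → Fin (k - 1)}
    (hθ : θ ∈ Aset k hk G htree t₀ u) :
    θ = Function.update (rst k hk (bdV htree t₀ z) θ) z.1 (θ z.1) := by
  obtain ⟨f, hf, hnf, rfl⟩ := (mem_Aset_iff k hk).mp hθ
  set θ := rst k hk (bdV htree t₀ u) f with hθdef
  have hbd : bdV htree t₀ u = bdV htree t₀ z ∪ {z.1} := bdV_child hdu hpar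
  funext v
  by_cases hvz : v = z.1
  · subst hvz; rw [Function.update_self]
  · rw [Function.update_of_ne hvz]
    by_cases hv : v ∈ bdV htree t₀ z
    · rw [rst_apply_mem k hk hv]
    · rw [rst_apply_not_mem k hk hv, hθdef,
        rst_apply_not_mem k hk (by rw [hbd]; rintro (h | h); exact hv h; exact hvz h)]

lemma aset_value_c1 {G : SimpleGraph V} {htree : T.IsTree} {t₀ u z : {x : V // x ∉ X}}
    (hdz : T.dist t₀ z = 1) (hdu : T.dist t₀ u = T.dist t₀ z + 1)
    (hpar : par htree t₀ u = z) {θ : V → Fin (k - 1)}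
    (hθ : θ ∈ Aset k hk G htree t₀ u) : θ z.1 = ⟨1, by omega⟩ := by
  obtain ⟨f, hf, hnf, rfl⟩ := (mem_Aset_iff k hk).mp hθ
  have hzmem : z ∈ (pth htree t₀ u).support := hpar ▸ par_mem_pth htree t₀ u
  have hzbd : z.1 ∈ bdV htree t₀ u := by
    rw [bdV_child (by omega) hpar]; exact Or.inr rfl
  rw [rst_apply_mem k hk hzbd]
  have ha1 : anc1 htree t₀ u = z := anc1_eq_of_mem htree t₀ hzmem hdz (by omega)
  have := hnf.2 (by omega)
  rwa [ha1] at this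

lemma aset_value_ne {G : SimpleGraph V} {htree : T.IsTree} {t₀ u z : {x : V // x ∉ X}}
    (hsub : T ≤ G.induce {x : V | x ∉ X})
    (hdz : 2 ≤ T.dist t₀ z) (hdu : T.dist t₀ u = T.dist t₀ z + 1)
    (hpar : par htree t₀ u = z) {θ : V → Fin (k - 1)}
    (hθ : θ ∈ Aset k hk G htree t₀ u) :
    θ z.1 ≠ (rst k hk (bdV htree t₀ z) θ) ((par htree t₀ z).1) := by
  obtain ⟨f, hf, hnf, rfl⟩ := (mem_Aset_iff k hk).mp hθ
  set θ := rst k hk (bdV htree t₀ u) f with hθdef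
  have hdpz : T.dist t₀ (par htree t₀ z) = T.dist t₀ z - 1 := dist_par htree t₀ (by omega)
  have hzbd : z.1 ∈ bdV htree t₀ u := by
    rw [bdV_child (by omega) hpar]; exact Or.inr rfl
  have hpzbdz : (par htree t₀ z).1 ∈ bdV htree t₀ z := by
    refine Or.inr ⟨par htree t₀ z, rfl, par_mem_pth htree t₀ z, fun h => ?_⟩
    rw [h] at hdpz; omega
  have hpzbdu : (par htree t₀ z).1 ∈ bdV htree t₀ u := bdV_subset_child (by omega) hpar hpzbdz
  have hadjT : T.Adj (par htree t₀ z) z := adj_par htree t₀ (by omega)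
  have hadjG : G.Adj z.1 (par htree t₀ z).1 := (hsub hadjT).symm
  have hz_nd : z.1 ∉ descV htree t₀ u := not_mem_descV_of_dist_lt (by omega)
  have hpz_nd : (par htree t₀ z).1 ∉ descV htree t₀ u :=
    not_mem_descV_of_dist_lt (by omega)
  have hne := hf z.1 (par htree t₀ z).1 hadjG hz_nd hpz_nd
  rw [rst_apply_mem k hk hpzbdz, hθdef, rst_apply_mem k hk hzbd, rst_apply_mem k hk hpzbdu]
  exact hne

lemma sum_children {G : SimpleGraph V} (hG : IsCritical k G) {htree : T.IsTree}
    {t₀ : {x : V // x ∉ X}} (hsub : T ≤ G.induce {x : V | x ∉ X})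
    (hdfs : ∀ x y : {x : V // x ∉ X}, (G.induce {x : V | x ∉ X}).Adj x y →
      (∃ p : T.Walk t₀ y, p.IsPath ∧ x ∈ p.support) ∨
      (∃ p : T.Walk t₀ x, p.IsPath ∧ y ∈ p.support))
    {z : {x : V // x ∉ X}} {d : ℕ} (hdz : T.dist t₀ z = d) (hd1 : 1 ≤ d) :
    ∑ u ∈ (Finset.univ.filter (fun u => T.dist t₀ u = d + 1)).filter
        (fun u => par htree t₀ u = z), (Aset k hk G htree t₀ u).card
      ≤ (if d = 1 then 1 else (k - 2)) * (Aset k hk G htree t₀ z).card := by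
  classical
  set C := (Finset.univ.filter (fun u => T.dist t₀ u = d + 1)).filter
    (fun u => par htree t₀ u = z) with hC
  have hmemC : ∀ u ∈ C, T.dist t₀ u = d + 1 ∧ par htree t₀ u = z := by
    intro u hu
    simp only [hC, Finset.mem_filter, Finset.mem_univ, true_and] at hu
    exact hu
  have hdisj : ∀ u ∈ C, ∀ u' ∈ C, u ≠ u' →
      Disjoint (Aset k hk G htree t₀ u) (Aset k hk G htree t₀ u') := by
    intro u hu u' hu' hne
    obtain ⟨hd₁, hp₁⟩ := hmemC u hu
    obtain ⟨hd₂, hp₂⟩ := hmemC u' hu'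
    exact aset_disjoint k hk hG hdfs (by omega) (by omega) (by rw [hp₁, hp₂]) hne
  rw [← Finset.card_biUnion hdisj]
  set s := C.biUnion (fun u => Aset k hk G htree t₀ u) with hs
  set Ψ : (V → Fin (k - 1)) → (V → Fin (k - 1)) := rst k hk (bdV htree t₀ z) with hΨ
  have hmem_s : ∀ θ ∈ s, ∃ u ∈ C, θ ∈ Aset k hk G htree t₀ u := by
    intro θ hθ
    simpa [hs, Finset.mem_biUnion] using hθ
  have himg : s.image Ψ ⊆ Aset k hk G htree t₀ z := by
    intro η hη
    obtain ⟨θ, hθ, rfl⟩ := Finset.mem_image.mp hη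
    obtain ⟨u, hu, hθu⟩ := hmem_s θ hθ
    obtain ⟨hd₁, hp₁⟩ := hmemC u hu
    exact rst_mem_Aset_par k hk (by omega) (by omega) hp₁ hθu
  have hupd : ∀ θ ∈ s, θ = Function.update (Ψ θ) z.1 (θ z.1) := by
    intro θ hθ
    obtain ⟨u, hu, hθu⟩ := hmem_s θ hθ
    obtain ⟨hd₁, hp₁⟩ := hmemC u hu
    exact aset_update k hk (by omega) hp₁ hθu
  have hfib : ∀ η ∈ s.image Ψ, (s.filter (fun θ => Ψ θ = η)).card ≤
      (if d = 1 then 1 else (k - 2)) := by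
    intro η hη
    by_cases hone : d = 1
    · rw [if_pos hone]
      refine Finset.card_le_one.mpr ?_
      intro θ hθ θ' hθ'
      rw [Finset.mem_filter] at hθ hθ'
      obtain ⟨u, hu, hθu⟩ := hmem_s θ hθ.1
      obtain ⟨u', hu', hθu'⟩ := hmem_s θ' hθ'.1
      obtain ⟨hd₁, hp₁⟩ := hmemC u hu
      obtain ⟨hd₂, hp₂⟩ := hmemC u' hu'
      have e1 : θ z.1 = ⟨1, by omega⟩ :=
        aset_value_c1 k hk (by omega) (by omega) hp₁ hθu
      have e2 : θ' z.1 = ⟨1, by omega⟩ :=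
        aset_value_c1 k hk (by omega) (by omega) hp₂ hθu'
      rw [hupd θ hθ.1, hupd θ' hθ'.1, hθ.2, hθ'.2, e1, e2]
    · rw [if_neg hone]
      have hd2 : 2 ≤ d := by omega
      refine le_trans (Finset.card_le_card_of_injOn
        (t := Finset.univ.erase (η ((par htree t₀ z).1))) (fun θ => θ z.1)
        (fun θ hθ => ?_) (fun θ hθ θ' hθ' hvv => ?_)) ?_
      · rw [Finset.mem_coe, Finset.mem_filter] at hθ
        obtain ⟨u, hu, hθu⟩ := hmem_s θ hθ.1
        obtain ⟨hd₁, hp₁⟩ := hmemC u hu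
        have := aset_value_ne k hk hsub (by omega) (by omega) hp₁ hθu
        rw [show rst k hk (bdV htree t₀ z) θ = η from hθ.2] at this
        exact Finset.mem_erase.mpr ⟨this, Finset.mem_univ _⟩
      · simp only [Finset.coe_filter, Set.mem_setOf_eq] at hθ hθ'
        have hv2 : θ z.1 = θ' z.1 := hvv
        rw [hupd θ hθ.1, hupd θ' hθ'.1, hθ.2, hθ'.2, hv2]
      · rw [Finset.card_erase_of_mem (Finset.mem_univ _)]
        simp only [Finset.card_univ, Fintype.card_fin]
        omega
  calc s.card ≤ (if d = 1 then 1 else (k - 2)) * (s.image Ψ).card :=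
        Finset.card_le_mul_card_image s _ hfib
    _ ≤ (if d = 1 then 1 else (k - 2)) * (Aset k hk G htree t₀ z).card :=
        Nat.mul_le_mul_left _ (Finset.card_le_card himg)

lemma sum_level_one {G : SimpleGraph V} (hG : IsCritical k G) {htree : T.IsTree}
    {t₀ : {x : V // x ∉ X}}
    (hdfs : ∀ x y : {x : V // x ∉ X}, (G.induce {x : V | x ∉ X}).Adj x y →
      (∃ p : T.Walk t₀ y, p.IsPath ∧ x ∈ p.support) ∨
      (∃ p : T.Walk t₀ x, p.IsPath ∧ y ∈ p.support)) :
    ∑ z ∈ Finset.univ.filter (fun z => T.dist t₀ z = 1),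
      (Aset k hk G htree t₀ z).card ≤ (k - 1) ^ X.card := by
  classical
  have hdisj : ∀ z ∈ Finset.univ.filter (fun z => T.dist t₀ z = 1),
      ∀ z' ∈ Finset.univ.filter (fun z => T.dist t₀ z = 1), z ≠ z' →
      Disjoint (Aset k hk G htree t₀ z) (Aset k hk G htree t₀ z') := by
    intro z hz z' hz' hne
    simp only [Finset.mem_filter, Finset.mem_univ, true_and] at hz hz'
    refine aset_disjoint k hk hG hdfs (by omega) (by omega) ?_ hne
    rw [par_of_dist_one hz, par_of_dist_one hz']
  rw [← Finset.card_biUnion hdisj]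
  refine le_trans (Finset.card_le_card_of_injOn
    (t := (Finset.univ : Finset (↑X → Fin (k - 1)))) (fun θ => fun x => θ x.1)
    (fun _ _ => Finset.mem_univ _) ?_) ?_
  · intro θ hθ θ' hθ' hvv
    simp only [Finset.coe_biUnion, Set.mem_iUnion, Finset.mem_coe] at hθ hθ'
    obtain ⟨z, hz, hθz⟩ := hθ
    obtain ⟨z', hz', hθz'⟩ := hθ'
    simp only [Finset.mem_filter, Finset.mem_univ, true_and] at hz hz'
    obtain ⟨f, hf, hnf, rfl⟩ := (mem_Aset_iff k hk).mp hθz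
    obtain ⟨g, hg, hng, rfl⟩ := (mem_Aset_iff k hk).mp hθz'
    funext v
    by_cases hvX : v ∈ X
    · have := congrFun hvv ⟨v, hvX⟩
      simpa using this
    · by_cases hvt : v = t₀.1
      · subst hvt
        have h1 : t₀.1 ∈ bdV htree t₀ z := by
          rw [bdV_of_dist_one hz]; exact Or.inr rfl
        have h2 : t₀.1 ∈ bdV htree t₀ z' := by
          rw [bdV_of_dist_one hz']; exact Or.inr rfl
        rw [rst_apply_mem k hk h1, rst_apply_mem k hk h2, hnf.1, hng.1]
      · have h1 : v ∉ bdV htree t₀ z := by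
          rw [bdV_of_dist_one hz]; rintro (h | h); exact hvX h; exact hvt h
        have h2 : v ∉ bdV htree t₀ z' := by
          rw [bdV_of_dist_one hz']; rintro (h | h); exact hvX h; exact hvt h
        rw [rst_apply_not_mem k hk h1, rst_apply_not_mem k hk h2]
  · rw [Finset.card_univ, Fintype.card_fun, Fintype.card_fin, Fintype.card_coe]

end Main

end Stmt3Aux

theorem stmt3 (k : ℕ) (hk : 4 ≤ k)
    (V : Type) [Fintype V] [DecidableEq V] (G : SimpleGraph V) (hG : IsCritical k G)
    (X : Finset V) (s : ℕ) (hX : X.card = s)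
    -- `T` is a spanning tree of `G ∖ X`, the graph obtained from `G` by deleting `X` ...
    (T : SimpleGraph {x : V // x ∉ X}) (htree : T.IsTree)
    (hsub : T ≤ G.induce {x : V | x ∉ X})
    -- ... which is a DFS tree rooted at `t₀` :
    (t₀ : {x : V // x ∉ X})
    (hdfs : ∀ x y : {x : V // x ∉ X}, (G.induce {x : V | x ∉ X}).Adj x y →
      (∃ p : T.Walk t₀ y, p.IsPath ∧ x ∈ p.support) ∨
      (∃ p : T.Walk t₀ x, p.IsPath ∧ y ∈ p.support)) :
    ∀ j : ℕ, 1 ≤ j →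
      (j = 1 → {t : {x : V // x ∉ X} | T.dist t₀ t = j}.ncard ≤ (k - 1) ^ s) ∧
      (2 ≤ j → {t : {x : V // x ∉ X} | T.dist t₀ t = j}.ncard
        ≤ (k - 2) ^ (j - 2) * (k - 1) ^ s) := by
  classical
  open Stmt3Aux in
  intro j hj
  have hset : ∀ d : ℕ, {t : {x : V // x ∉ X} | T.dist t₀ t = d}.ncard =
      (Finset.univ.filter (fun u => T.dist t₀ u = d)).card := by
    intro d
    rw [show {t : {x : V // x ∉ X} | T.dist t₀ t = d} =
      ↑(Finset.univ.filter (fun u => T.dist t₀ u = d)) by ext t; simp,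
      Set.ncard_coe_finset]
  have hLP : ∀ d : ℕ, 1 ≤ d → (Finset.univ.filter (fun u => T.dist t₀ u = d)).card ≤
      ∑ z ∈ Finset.univ.filter (fun u => T.dist t₀ u = d),
        (Stmt3Aux.Aset k hk G htree t₀ z).card := by
    intro d hd
    rw [Finset.card_eq_sum_ones]
    refine Finset.sum_le_sum ?_
    intro z hz
    simp only [Finset.mem_filter, Finset.mem_univ, true_and] at hz
    exact Finset.card_pos.mpr (Stmt3Aux.aset_nonempty k hk hG hsub (by omega))
  have hstep : ∀ d : ℕ, 1 ≤ d →
      ∑ u ∈ Finset.univ.filter (fun u => T.dist t₀ u = d + 1),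
        (Stmt3Aux.Aset k hk G htree t₀ u).card ≤
      (if d = 1 then 1 else (k - 2)) *
        ∑ z ∈ Finset.univ.filter (fun u => T.dist t₀ u = d),
          (Stmt3Aux.Aset k hk G htree t₀ z).card := by
    intro d hd
    have hmaps : ∀ u ∈ Finset.univ.filter (fun u => T.dist t₀ u = d + 1),
        Stmt3Aux.par htree t₀ u ∈ Finset.univ.filter (fun u => T.dist t₀ u = d) := by
      intro u hu
      simp only [Finset.mem_filter, Finset.mem_univ, true_and] at hu ⊢
      have := Stmt3Aux.dist_par htree t₀ (u := u) (by omega)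
      omega
    rw [← Finset.sum_fiberwise_of_maps_to hmaps
      (fun u => (Stmt3Aux.Aset k hk G htree t₀ u).card), Finset.mul_sum]
    refine Finset.sum_le_sum ?_
    intro z hz
    simp only [Finset.mem_filter, Finset.mem_univ, true_and] at hz
    exact Stmt3Aux.sum_children k hk hG hsub hdfs hz hd
  have hPhi1 : ∑ z ∈ Finset.univ.filter (fun u => T.dist t₀ u = 1),
      (Stmt3Aux.Aset k hk G htree t₀ z).card ≤ (k - 1) ^ s := by
    rw [← hX]
    exact Stmt3Aux.sum_level_one k hk hG hdfs
  have hPhi2 : ∑ z ∈ Finset.univ.filter (fun u => T.dist t₀ u = 2),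
      (Stmt3Aux.Aset k hk G htree t₀ z).card ≤ (k - 1) ^ s := by
    have := hstep 1 le_rfl
    rw [if_pos rfl, one_mul] at this
    exact le_trans this hPhi1
  have hPhij : ∀ m : ℕ, 2 ≤ m →
      ∑ z ∈ Finset.univ.filter (fun u => T.dist t₀ u = m),
        (Stmt3Aux.Aset k hk G htree t₀ z).card ≤ (k - 2) ^ (m - 2) * (k - 1) ^ s := by
    intro m hm
    induction m, hm using Nat.le_induction with
    | base => simpa using hPhi2
    | succ n hn ih =>
      have h1 := hstep n (by omega)
      rw [if_neg (by omega)] at h1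
      calc ∑ z ∈ Finset.univ.filter (fun u => T.dist t₀ u = n + 1),
            (Stmt3Aux.Aset k hk G htree t₀ z).card
          ≤ (k - 2) * ∑ z ∈ Finset.univ.filter (fun u => T.dist t₀ u = n),
            (Stmt3Aux.Aset k hk G htree t₀ z).card := h1
        _ ≤ (k - 2) * ((k - 2) ^ (n - 2) * (k - 1) ^ s) := Nat.mul_le_mul_left _ ih
        _ = (k - 2) ^ (n + 1 - 2) * (k - 1) ^ s := by
            rw [show n + 1 - 2 = (n - 2) + 1 by omega, pow_succ]
            ring
  constructor
  · intro hj1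
    subst hj1
    rw [hset 1]
    exact le_trans (hLP 1 le_rfl) hPhi1
  · intro hj2
    rw [hset j]
    exact le_trans (hLP j (by omega)) (hPhij j hj2)
end

section
/- Let k ≥ 4 be an integer, let G be a k-critical graph, and let u, v be distinct vertices of G such that the graph G∖{u,v} obtained by deleting u and v is disconnected. Then u and v are not adjacent in G, and G∖{u,v} has exactly two connected components. -/
open SimpleGraph

/-- Given `x = y ↔ a = b`, there is a permutation sending `x` to `a` and `y` to `b`. -/
lemma exists_perm_fact {α : Type*} [DecidableEq α] (x y a b : α) (h : x = y ↔ a = b) :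
    ∃ σ : Equiv.Perm α, σ x = a ∧ σ y = b := by
  by_cases hxy : x = y
  · subst hxy
    refine ⟨Equiv.swap x a, Equiv.swap_apply_left x a, ?_⟩
    rw [← h.mp rfl]
    exact Equiv.swap_apply_left x a
  · have hab : a ≠ b := fun hh => hxy (h.mpr hh)
    refine ⟨(Equiv.swap x a).trans (Equiv.swap ((Equiv.swap x a) y) b), ?_, ?_⟩
    · simp only [Equiv.trans_apply, Equiv.swap_apply_left]
      have h1 : a ≠ (Equiv.swap x a) y := by
        intro hh
        exact hxy ((Equiv.swap x a).injective ((Equiv.swap_apply_left x a).trans hh))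
      rw [Equiv.swap_apply_of_ne_of_ne h1 hab]
    · simp only [Equiv.trans_apply, Equiv.swap_apply_left]

theorem stmt9 (k : ℕ) (hk : 4 ≤ k)
    (V : Type) [Fintype V] (G : SimpleGraph V) (hG : IsCritical k G)
    (u v : V) (huv : u ≠ v)
    (hdisc : ¬ (G.induce ({u, v}ᶜ : Set V)).Connected) :
    ¬ G.Adj u v ∧
      Nat.card (G.induce ({u, v}ᶜ : Set V)).ConnectedComponent = 2 := by
  classical
  obtain ⟨hncol, hcrit⟩ := hG
  set S : Set V := {u, v}ᶜ with hSdef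
  have hmemS : ∀ w : V, w ∈ S ↔ w ≠ u ∧ w ≠ v := by
    intro w
    simp [hSdef, not_or]
  -- every proper induced subgraph is (k-1)-colorable
  have hcolA : ∀ A : Set V, A ≠ Set.univ → (G.induce A).Colorable (k - 1) := by
    intro A hA
    rw [SimpleGraph.induce_eq_coe_induce_top]
    refine hcrit _ fun h => hA ?_
    have := congrArg SimpleGraph.Subgraph.verts h
    simpa using this
  -- V has many vertices
  have hcardV : 3 < Fintype.card V := by
    by_contra h
    push_neg at h
    exact hncol ((G.colorable_of_fintype).mono (by omega))
  obtain ⟨w₀, hw₀⟩ : ∃ w : V, w ≠ u ∧ w ≠ v := by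
    by_contra h
    push_neg at h
    have hsub : (Finset.univ : Finset V) ⊆ {u, v} := by
      intro w _
      by_cases hwu : w = u
      · simp [hwu]
      · simp [h w hwu]
    have h1 := Finset.card_le_card hsub
    have h2 : ({u, v} : Finset V).card ≤ 2 :=
      (Finset.card_insert_le _ _).trans (by simp)
    rw [Finset.card_univ] at h1
    omega
  have hSne : Nonempty S := ⟨⟨w₀, (hmemS w₀).mpr hw₀⟩⟩
  have hpre : ¬ (G.induce S).Preconnected := by
    intro h
    exact hdisc ((connected_iff _).mpr ⟨h, hSne⟩)
  obtain ⟨x₁, x₂, hx12⟩ : ∃ x y : S, ¬ (G.induce S).Reachable x y := by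
    by_contra h
    push_neg at h
    exact hpre h
  have hd12 : (G.induce S).connectedComponentMk x₁ ≠ (G.induce S).connectedComponentMk x₂ :=
    fun h => hx12 (SimpleGraph.ConnectedComponent.exact h)
  -- vertex set associated to each component
  let vertsOf : (G.induce S).ConnectedComponent → Set V := fun c =>
    {w | w = u ∨ w = v ∨ ∃ h : w ∈ S, (G.induce S).connectedComponentMk ⟨w, h⟩ = c}
  have hu : ∀ c, u ∈ vertsOf c := fun c => Or.inl rfl
  have hv : ∀ c, v ∈ vertsOf c := fun c => Or.inr (Or.inl rfl)
  have hmemV : ∀ (w : V) (hw : w ∈ S),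
      w ∈ vertsOf ((G.induce S).connectedComponentMk ⟨w, hw⟩) :=
    fun w hw => Or.inr (Or.inr ⟨hw, rfl⟩)
  have hvertsne : ∀ c, vertsOf c ≠ Set.univ := by
    intro c hc
    obtain ⟨c', hc'⟩ : ∃ c', c' ≠ c := by
      by_cases h : (G.induce S).connectedComponentMk x₁ = c
      · exact ⟨(G.induce S).connectedComponentMk x₂, fun hh => hd12 (by rw [h, hh])⟩
      · exact ⟨_, h⟩
    obtain ⟨x, hx⟩ := c'.exists_rep
    have hxin : (x : V) ∈ vertsOf c := by rw [hc]; trivial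
    rcases hxin with h1 | h1 | ⟨h2, h3⟩
    · exact ((hmemS x).mp x.2).1 h1
    · exact ((hmemS x).mp x.2).2 h1
    · exact hc' (hx.symm.trans h3)
  -- the gluing argument
  have glue : ∀ a b : Fin (k - 1), (G.Adj u v → a ≠ b) →
      (∀ c, ∃ f : (G.induce (vertsOf c)).Coloring (Fin (k - 1)),
        f ⟨u, hu c⟩ = a ∧ f ⟨v, hv c⟩ = b) → False := by
    intro a b hab hex
    choose f hfu hfv using hex
    have fcongr : ∀ (c c' : (G.induce S).ConnectedComponent) (hcc : c = c') (w : V)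
        (h1 : w ∈ vertsOf c) (h2 : w ∈ vertsOf c'), f c ⟨w, h1⟩ = f c' ⟨w, h2⟩ := by
      rintro c c' rfl w h1 h2; rfl
    let g : V → Fin (k - 1) := fun w =>
      if hw : w ∈ S then f ((G.induce S).connectedComponentMk ⟨w, hw⟩) ⟨w, hmemV w hw⟩
      else if w = u then a else b
    have gS : ∀ (w : V) (hw : w ∈ S),
        g w = f ((G.induce S).connectedComponentMk ⟨w, hw⟩) ⟨w, hmemV w hw⟩ :=
      fun w hw => dif_pos hw
    have hus : u ∉ S := fun h => ((hmemS u).mp h).1 rfl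
    have hvs : v ∉ S := fun h => ((hmemS v).mp h).2 rfl
    have gu : g u = a := by
      show (if hw : u ∈ S then _ else if u = u then a else b) = a
      rw [dif_neg hus, if_pos rfl]
    have gv : g v = b := by
      show (if hw : v ∈ S then _ else if v = u then a else b) = b
      rw [dif_neg hvs, if_neg huv.symm]
    have key : ∀ (w x : V), G.Adj w x → w ∈ S → g w ≠ g x := by
      intro w x hadj hw
      rw [gS w hw]
      by_cases hx : x ∈ S
      · have hcc : (G.induce S).connectedComponentMk ⟨x, hx⟩ =
            (G.induce S).connectedComponentMk ⟨w, hw⟩ := by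
          apply SimpleGraph.ConnectedComponent.sound
          exact SimpleGraph.Adj.reachable (by exact hadj.symm)
        have hx' : x ∈ vertsOf ((G.induce S).connectedComponentMk ⟨w, hw⟩) := by
          rw [← hcc]; exact hmemV x hx
        have hgx : g x = f ((G.induce S).connectedComponentMk ⟨w, hw⟩) ⟨x, hx'⟩ := by
          rw [gS x hx]; exact fcongr _ _ hcc x _ _
        rw [hgx]
        exact (f _).valid (by exact hadj)
      · have hx2 : x = u ∨ x = v := by
          by_contra h
          push_neg at h
          exact hx ((hmemS x).mpr h)
        rcases hx2 with rfl | rfl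
        · rw [gu, ← hfu ((G.induce S).connectedComponentMk ⟨w, hw⟩)]
          exact (f _).valid (by exact hadj)
        · rw [gv, ← hfv ((G.induce S).connectedComponentMk ⟨w, hw⟩)]
          exact (f _).valid (by exact hadj)
    refine hncol ⟨SimpleGraph.Coloring.mk g ?_⟩
    intro w x hadj
    by_cases hw : w ∈ S
    · exact key w x hadj hw
    · by_cases hx : x ∈ S
      · exact (key x w hadj.symm hx).symm
      · have hw2 : w = u ∨ w = v := by
          by_contra h; push_neg at h; exact hw ((hmemS w).mpr h)
        have hx2 : x = u ∨ x = v := by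
          by_contra h; push_neg at h; exact hx ((hmemS x).mpr h)
        rcases hw2 with rfl | rfl <;> rcases hx2 with rfl | rfl
        · exact (hadj.ne rfl).elim
        · rw [gu, gv]; exact hab hadj
        · rw [gv, gu]; exact (hab hadj.symm).symm
        · exact (hadj.ne rfl).elim
  -- recoloring
  have recolor : ∀ (c) (f : (G.induce (vertsOf c)).Coloring (Fin (k - 1))) (a b : Fin (k - 1)),
      (f ⟨u, hu c⟩ = f ⟨v, hv c⟩ ↔ a = b) →
      ∃ f' : (G.induce (vertsOf c)).Coloring (Fin (k - 1)),
        f' ⟨u, hu c⟩ = a ∧ f' ⟨v, hv c⟩ = b := by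
    intro c f a b hiff
    obtain ⟨σ, hσ1, hσ2⟩ := exists_perm_fact _ _ a b hiff
    exact ⟨SimpleGraph.Coloring.mk (fun x => σ (f x)) (fun h => σ.injective.ne (f.valid h)),
      hσ1, hσ2⟩
  let a0 : Fin (k - 1) := ⟨0, by omega⟩
  let a1 : Fin (k - 1) := ⟨1, by omega⟩
  have ha01 : a0 ≠ a1 := by
    intro h
    have := congrArg Fin.val h
    simp [a0, a1] at this
  have colC : ∀ c, Nonempty ((G.induce (vertsOf c)).Coloring (Fin (k - 1))) :=
    fun c => hcolA _ (hvertsne c)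
  -- u and v are not adjacent
  have hnadj : ¬ G.Adj u v := by
    intro hadj
    refine glue a0 a1 (fun _ => ha01) fun c => ?_
    obtain ⟨f⟩ := colC c
    have hne : f ⟨u, hu c⟩ ≠ f ⟨v, hv c⟩ := f.valid (by exact hadj)
    exact recolor c f a0 a1 (iff_of_false hne ha01)
  -- a component where all colorings agree on u, v
  obtain ⟨c₀, hc₀⟩ : ∃ c₀, ∀ f : (G.induce (vertsOf c₀)).Coloring (Fin (k - 1)),
      f ⟨u, hu c₀⟩ = f ⟨v, hv c₀⟩ := by
    by_contra h
    push_neg at h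
    refine glue a0 a1 (fun _ => ha01) fun c => ?_
    obtain ⟨f, hf⟩ := h c
    exact recolor c f a0 a1 (iff_of_false hf ha01)
  -- a component where all colorings disagree on u, v
  obtain ⟨c₁, hc₁⟩ : ∃ c₁, ∀ f : (G.induce (vertsOf c₁)).Coloring (Fin (k - 1)),
      f ⟨u, hu c₁⟩ ≠ f ⟨v, hv c₁⟩ := by
    by_contra h
    push_neg at h
    refine glue a0 a0 (fun had => absurd had hnadj) fun c => ?_
    obtain ⟨f, hf⟩ := h c
    exact recolor c f a0 a0 (iff_of_true hf rfl)
  have hc01 : c₀ ≠ c₁ := by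
    rintro rfl
    obtain ⟨f⟩ := colC c₀
    exact hc₁ f (hc₀ f)
  -- every component is c₀ or c₁
  have hall : ∀ c, c = c₀ ∨ c = c₁ := by
    intro c₂
    by_contra h
    push_neg at h
    obtain ⟨h0, h1⟩ := h
    let B : Set V := {w | ¬ ∃ hw : w ∈ S, (G.induce S).connectedComponentMk ⟨w, hw⟩ = c₂}
    have hBu : u ∈ B := by
      rintro ⟨hw, -⟩
      exact ((hmemS u).mp hw).1 rfl
    have hBv : v ∈ B := by
      rintro ⟨hw, -⟩
      exact ((hmemS v).mp hw).2 rfl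
    have hBsub : ∀ c, c ≠ c₂ → vertsOf c ⊆ B := by
      intro c hc w hwv
      rcases hwv with rfl | rfl | ⟨hw, hmk⟩
      · exact hBu
      · exact hBv
      · rintro ⟨hw', hmk'⟩
        exact hc (by rw [← hmk, ← hmk'])
    have hBne : B ≠ Set.univ := by
      intro hB
      obtain ⟨x, hx⟩ := c₂.exists_rep
      have hxB : (x : V) ∈ B := by rw [hB]; trivial
      exact hxB ⟨x.2, hx⟩
    obtain ⟨F⟩ := hcolA B hBne
    let f₀ : (G.induce (vertsOf c₀)).Coloring (Fin (k - 1)) :=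
      SimpleGraph.Coloring.mk (fun x => F ⟨x.1, hBsub c₀ (Ne.symm h0) x.2⟩) (fun h => F.valid (by exact h))
    let f₁ : (G.induce (vertsOf c₁)).Coloring (Fin (k - 1)) :=
      SimpleGraph.Coloring.mk (fun x => F ⟨x.1, hBsub c₁ (Ne.symm h1) x.2⟩) (fun h => F.valid (by exact h))
    have e0 : F ⟨u, hBu⟩ = F ⟨v, hBv⟩ := hc₀ f₀
    have e1 : F ⟨u, hBu⟩ ≠ F ⟨v, hBv⟩ := hc₁ f₁
    exact e1 e0
  refine ⟨hnadj, ?_⟩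
  rw [Nat.card_eq_two_iff]
  refine ⟨c₀, c₁, hc01, ?_⟩
  ext c
  simp only [Set.mem_insert_iff, Set.mem_singleton_iff, Set.mem_univ, iff_true]
  exact hall c
end

section
/- Let k ≥ 4 be an integer, let G be a k-critical graph, and let u, v be distinct vertices of G such that G∖{u,v} is disconnected. Then there exist proper induced subgraphs G₁ and G₂ of G such that G = G₁ ∪ G₂, V(G₁) ∩ V(G₂) = {u,v}, the graphs G₁∖{u,v} and G₂∖{u,v} are the two connected components of G∖{u,v}, u and v have no common neighbor in G₂, the graph G₁ + uv obtained from G₁ by adding the edge uv is k-critical, and the graph obtained from G₂ by identifying the vertices u and v (a simple graph, since u and v are nonadjacent and have no common neighbor in G₂) is k-critical. -/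
open SimpleGraph

/-- The graph obtained from `G` by adding the edge `xy`. -/
def addEdge {V : Type*} (G : SimpleGraph V) (x y : V) : SimpleGraph V :=
  G ⊔ SimpleGraph.fromEdgeSet {s(x, y)}

/-- The graph obtained from `G` by identifying the vertices `u` and `v`
(the merged vertex is represented by `u`, and `v` is removed). -/
def identify {V : Type*} (G : SimpleGraph V) (u v : V) :
    SimpleGraph {x : V // x ≠ v} where
  Adj a b := (a : V) ≠ (b : V) ∧
    (G.Adj a b ∨ ((a : V) = u ∧ G.Adj v b) ∨ ((b : V) = u ∧ G.Adj (a : V) v))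
  symm := by
    constructor; rintro a b ⟨hne, h | ⟨ha, h⟩ | ⟨hb, h⟩⟩
    · exact ⟨hne.symm, Or.inl h.symm⟩
    · exact ⟨hne.symm, Or.inr (Or.inr ⟨ha, h.symm⟩)⟩
    · exact ⟨hne.symm, Or.inr (Or.inl ⟨hb, h.symm⟩)⟩
  loopless := by constructor; rintro a ⟨hne, -⟩; exact hne rfl

section
variable {V : Type} {m : ℕ} (G : SimpleGraph V)

/-- proper on a set, as a total function -/
def ProperOn (S : Set V) (c : V → Fin m) : Prop :=
  ∀ a ∈ S, ∀ b ∈ S, G.Adj a b → c a ≠ c b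

variable {G}

theorem properOn_mono {S T : Set V} {c : V → Fin m} (h : ProperOn G T c) (hST : S ⊆ T) :
    ProperOn G S c := fun a ha b hb hab => h a (hST ha) b (hST hb) hab

theorem properOn_comp {S : Set V} {c : V → Fin m} (h : ProperOn G S c) (σ : Equiv.Perm (Fin m)) :
    ProperOn G S (σ ∘ c) := fun a ha b hb hab hq => h a ha b hb hab (σ.injective hq)

/-- extract a total proper function from criticality for a non-top subgraph -/
theorem crit_extract {k : ℕ} (hk : 4 ≤ k) (hG : IsCritical k G) (H : G.Subgraph) (hH : H ≠ ⊤) :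
    ∃ c : V → Fin (k-1), ∀ a b, H.Adj a b → c a ≠ c b := by
  obtain ⟨Col⟩ := hG.2 H hH
  have h0 : 0 < k - 1 := by omega
  classical
  refine ⟨fun z => if h : z ∈ H.verts then Col ⟨z, h⟩ else ⟨0, h0⟩, fun a b hab hq => ?_⟩
  have ha := H.edge_vert hab
  have hb := H.edge_vert hab.symm
  simp only [dif_pos ha, dif_pos hb] at hq
  exact Col.valid ((by simpa using hab : H.coe.Adj ⟨a, ha⟩ ⟨b, hb⟩)) hq

theorem crit_induce {k : ℕ} (hk : 4 ≤ k) (hG : IsCritical k G) {S : Set V} (hS : S ≠ Set.univ) :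
    ∃ c : V → Fin (k-1), ProperOn G S c := by
  obtain ⟨c, hc⟩ := crit_extract hk hG ((⊤ : G.Subgraph).induce S) (by
    intro h
    exact hS (by simpa using congrArg Subgraph.verts h))
  exact ⟨c, fun a ha b hb hab => hc a b ⟨ha, hb, hab⟩⟩

theorem crit_deleteEdge {k : ℕ} (hk : 4 ≤ k) (hG : IsCritical k G) {x y : V} (hxy : G.Adj x y) :
    ∃ c : V → Fin (k-1), ∀ a b, G.Adj a b → s(a,b) ≠ s(x,y) → c a ≠ c b := by
  obtain ⟨c, hc⟩ := crit_extract hk hG ((⊤ : G.Subgraph).deleteEdges {s(x,y)}) (by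
    intro h
    have h2 : ((⊤:G.Subgraph).deleteEdges {s(x,y)}).Adj x y = (⊤:G.Subgraph).Adj x y := by rw [h]
    simp [hxy] at h2)
  exact ⟨c, fun a b hab hne => hc a b (by simp [hab, hne])⟩

theorem colorable_of_fun {n : ℕ} (c : V → Fin n) (h : ∀ a b, G.Adj a b → c a ≠ c b) :
    G.Colorable n := ⟨Coloring.mk c fun hab => h _ _ hab⟩

end

section
variable {V : Type} {m : ℕ} {G : SimpleGraph V} {u v : V}

/-- find a permutation aligning d with c at u, v -/
theorem align_perm (c d : V → Fin m) (hpat : c u = c v ↔ d u = d v) :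
    ∃ σ : Equiv.Perm (Fin m), σ (d u) = c u ∧ σ (d v) = c v := by
  by_cases h : d u = d v
  · refine ⟨Equiv.swap (d u) (c u), Equiv.swap_apply_left _ _, ?_⟩
    rw [← h, Equiv.swap_apply_left, hpat.2 h]
  · have hc : c u ≠ c v := fun hc => h (hpat.1 hc)
    set σ₁ := Equiv.swap (d u) (c u) with hσ₁
    have h1 : σ₁ (d u) = c u := Equiv.swap_apply_left _ _
    have h2 : σ₁ (d v) ≠ c u := fun he => h (σ₁.injective (he.trans h1.symm)).symm
    refine ⟨σ₁.trans (Equiv.swap (σ₁ (d v)) (c v)), ?_, ?_⟩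
    · simp only [Equiv.trans_apply, h1]
      exact Equiv.swap_apply_of_ne_of_ne (fun he => h2 he.symm) hc
    · simp only [Equiv.trans_apply]
      exact Equiv.swap_apply_left _ _

theorem glue {P Q : Set V} (hPQ : P ∪ Q = Set.univ) (hI : P ∩ Q ⊆ {u, v})
    (huP : u ∈ P) (hvP : v ∈ P) (huQ : u ∈ Q) (hvQ : v ∈ Q)
    (hsep : ∀ a ∈ P, a ∉ Q → ∀ b ∈ Q, b ∉ P → ¬ G.Adj a b)
    (c d : V → Fin m) (hc : ProperOn G P c) (hd : ProperOn G Q d)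
    (hu : c u = d u) (hv : c v = d v) :
    ∃ e : V → Fin m, ∀ a b, G.Adj a b → e a ≠ e b := by
  classical
  refine ⟨fun z => if z ∈ P then c z else d z, fun a b hab => ?_⟩
  have hcd : ∀ x ∈ P ∩ Q, c x = d x := by
    intro x hx
    rcases hI hx with h | h <;> subst h
    · exact hu
    · exact hv
  have hQ : ∀ x, x ∉ P → x ∈ Q := by
    intro x hx
    have hx2 : x ∈ P ∪ Q := hPQ ▸ Set.mem_univ x
    exact hx2.resolve_left hx
  by_cases ha : a ∈ P <;> by_cases hb : b ∈ P <;> simp only [if_pos, if_neg, ha, hb, if_true, if_false]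
  · exact hc a ha b hb hab
  · by_cases haQ : a ∈ Q
    · rw [hcd a ⟨ha, haQ⟩]; exact hd a haQ b (hQ b hb) hab
    · exact absurd hab (hsep a ha haQ b (hQ b hb) hb)
  · by_cases hbQ : b ∈ Q
    · rw [hcd b ⟨hb, hbQ⟩]; exact fun he => hd a (hQ a ha) b hbQ hab he
    · exact absurd hab.symm (hsep b hb hbQ a (hQ a ha) ha)
  · exact hd a (hQ a ha) b (hQ b hb) hab

end
section
variable {V : Type} (G : SimpleGraph V) (C : Set V)

/-- the connected component (as a subset of V) of x within the induced graph on C -/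
def comp (x : ↥C) : Set V := {w | ∃ h : w ∈ C, (G.induce C).Reachable x ⟨w, h⟩}

variable {G C}

theorem mem_comp_self (x : ↥C) : (x : V) ∈ comp G C x := ⟨x.2, by rfl⟩

theorem comp_subset (x : ↥C) : comp G C x ⊆ C := fun _ h => h.1

theorem comp_adj_closed (x : ↥C) {a b : V} (ha : a ∈ comp G C x) (hb : b ∈ C)
    (hab : G.Adj a b) : b ∈ comp G C x := by
  obtain ⟨haC, hr⟩ := ha
  exact ⟨hb, hr.trans (SimpleGraph.Adj.reachable (by exact hab : (G.induce C).Adj ⟨a, haC⟩ ⟨b, hb⟩))⟩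

theorem comp_reach (x : ↥C) {a : V} (ha : a ∈ comp G C x) {b : V} (hb : b ∈ comp G C x) :
    (G.induce C).Reachable ⟨a, ha.1⟩ ⟨b, hb.1⟩ := ha.2.symm.trans hb.2

theorem comp_inter (x y : ↥C) {w : V} (hx : w ∈ comp G C x) (hy : w ∈ comp G C y) :
    (G.induce C).Reachable x y := hx.2.trans hy.2.symm

theorem comp_walk (x : ↥C) : ∀ {s t : ↥C} (_ : (G.induce C).Walk s t)
    (hs : (s : V) ∈ comp G C x),
    ∃ ht : (t : V) ∈ comp G C x, (G.induce (comp G C x)).Reachable ⟨s, hs⟩ ⟨t, ht⟩ := by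
  intro s t p
  induction p with
  | nil => exact fun hs => ⟨hs, by rfl⟩
  | @cons s' t' w' h p ih =>
    intro hs
    have ht' : (t' : V) ∈ comp G C x := comp_adj_closed x hs t'.2 h
    obtain ⟨hw, hr⟩ := ih ht'
    exact ⟨hw, (SimpleGraph.Adj.reachable (by exact h : (G.induce (comp G C x)).Adj ⟨s', hs⟩ ⟨t', ht'⟩)).trans hr⟩

theorem comp_connected (x : ↥C) : (G.induce (comp G C x)).Connected := by
  rw [SimpleGraph.connected_iff]
  refine ⟨fun a b => ?_, ⟨⟨x, mem_comp_self x⟩⟩⟩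
  obtain ⟨pa⟩ := comp_reach x (mem_comp_self x) a.2
  obtain ⟨pb⟩ := comp_reach x (mem_comp_self x) b.2
  obtain ⟨ha', ra⟩ := comp_walk x pa (mem_comp_self x)
  obtain ⟨hb', rb⟩ := comp_walk x pb (mem_comp_self x)
  have key := ra.symm.trans rb
  have ea : (⟨((⟨(a:V), a.2.1⟩ : ↥C) : V), ha'⟩ : ↥(comp G C x)) = a := Subtype.ext rfl
  have eb : (⟨((⟨(b:V), b.2.1⟩ : ↥C) : V), hb'⟩ : ↥(comp G C x)) = b := Subtype.ext rfl
  rwa [ea, eb] at key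
end
section
variable {W : Type}

theorem subgraph_ne_top {Gr : SimpleGraph W} {H : Gr.Subgraph} (h : H ≠ ⊤) :
    (∃ w, w ∉ H.verts) ∨ ∃ x y, Gr.Adj x y ∧ ¬ H.Adj x y := by
  by_contra hc
  push_neg at hc
  obtain ⟨h1, h2⟩ := hc
  refine h (Subgraph.ext (Set.eq_univ_of_forall h1) ?_)
  ext a b
  exact ⟨fun hab => H.adj_sub hab, fun hab => h2 a b hab⟩

end

set_option linter.unusedSectionVars false
set_option linter.unusedVariables false
section
variable {V : Type} [Fintype V] {k : ℕ} {G : SimpleGraph V} {u v : V}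

/-- S forces the pattern t on u,v : every proper coloring of S has c u = c v iff t -/
def ForcedP (k : ℕ) (G : SimpleGraph V) (u v : V) (S : Set V) (t : Bool) : Prop :=
  ∀ c : V → Fin (k-1), ProperOn G S c → (c u = c v ↔ t = true)

theorem glue_contra (hk : 4 ≤ k) (hG : IsCritical k G) {P Q : Set V}
    (hPQ : P ∪ Q = Set.univ) (hI : P ∩ Q ⊆ {u, v})
    (huP : u ∈ P) (hvP : v ∈ P) (huQ : u ∈ Q) (hvQ : v ∈ Q)
    (hsep : ∀ a ∈ P, a ∉ Q → ∀ b ∈ Q, b ∉ P → ¬ G.Adj a b)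
    (c d : V → Fin (k-1)) (hc : ProperOn G P c) (hd : ProperOn G Q d)
    (hpat : c u = c v ↔ d u = d v) : False := by
  obtain ⟨σ, hσu, hσv⟩ := align_perm c d hpat
  obtain ⟨e, he⟩ := glue hPQ hI huP hvP huQ hvQ hsep c (σ ∘ d) hc (properOn_comp hd σ)
    hσu.symm hσv.symm
  exact hG.1 (colorable_of_fun e he)

/-- every separated piece forces a pattern -/
theorem forced_dichotomy (hk : 4 ≤ k) (hG : IsCritical k G) (huv : u ≠ v)
    {K : Set V} (hKC : K ⊆ ({u,v}ᶜ : Set V)) (hne : K.Nonempty)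
    (hcl : ∀ a ∈ K, ∀ b, b ∉ K → b ∉ ({u, v} : Set V) → ¬ G.Adj a b) :
    ∃ t : Bool, ForcedP k G u v (K ∪ {u, v}) t := by
  classical
  by_contra hcon
  push_neg at hcon
  have h1 := hcon true
  have h2 := hcon false
  simp only [ForcedP, not_forall] at h1 h2
  obtain ⟨d₁, hd₁, hp₁⟩ := h1
  obtain ⟨d₂, hd₂, hp₂⟩ := h2
  have hp₁' : d₁ u ≠ d₁ v := by
    intro h; exact hp₁ (by simp [h])
  have hp₂' : d₂ u = d₂ v := by
    by_contra h; exact hp₂ (by simp [h])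
  -- proper coloring of the complement of K
  obtain ⟨z, hz⟩ := hne
  have hP : (Set.univ \ K : Set V) ≠ Set.univ := by
    intro h
    have : z ∈ Set.univ \ K := by rw [h]; trivial
    exact this.2 hz
  obtain ⟨c, hc⟩ := crit_induce hk hG hP
  have huK : u ∉ K := fun h => (hKC h) (by simp)
  have hvK : v ∉ K := fun h => (hKC h) (by simp)
  have huP : u ∈ Set.univ \ K := ⟨trivial, huK⟩
  have hvP : v ∈ Set.univ \ K := ⟨trivial, hvK⟩
  have hQ : u ∈ K ∪ {u,v} ∧ v ∈ K ∪ {u,v} := ⟨Or.inr (by simp), Or.inr (by simp)⟩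
  have hsep : ∀ a ∈ (Set.univ \ K : Set V), a ∉ K ∪ ({u,v} : Set V) →
      ∀ b ∈ K ∪ ({u,v} : Set V), b ∉ (Set.univ \ K : Set V) → ¬ G.Adj a b := by
    intro a _ haQ b hbQ hbP hab
    have hbK : b ∈ K := by
      rcases hbQ with h | h
      · exact h
      · exact absurd ⟨trivial, fun hk' => (hKC hk') h⟩ hbP
    have haK : a ∉ K := fun h => haQ (Or.inl h)
    have hauv : a ∉ ({u,v} : Set V) := fun h => haQ (Or.inr h)
    exact hcl b hbK a haK hauv hab.symm
  have hPQ : (Set.univ \ K : Set V) ∪ (K ∪ {u,v}) = Set.univ := by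
    ext z; simp only [Set.mem_union, Set.mem_diff, Set.mem_univ, true_and, Set.mem_singleton_iff]
    tauto
  have hI : (Set.univ \ K : Set V) ∩ (K ∪ {u,v}) ⊆ ({u,v} : Set V) := by
    rintro z ⟨⟨_, hzK⟩, hz2⟩
    rcases hz2 with h | h
    · exact absurd h hzK
    · exact h
  by_cases hcuv : c u = c v
  · exact glue_contra hk hG hPQ hI huP hvP hQ.1 hQ.2 hsep c d₂ hc hd₂
      (by simp [hcuv, hp₂'])
  · exact glue_contra hk hG hPQ hI huP hvP hQ.1 hQ.2 hsep c d₁ hc hd₁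
      (by simp [hcuv, hp₁'])

end
set_option linter.unusedSectionVars false
set_option linter.unusedVariables false
section
variable {V : Type} [Fintype V] {k : ℕ} {G : SimpleGraph V} {u v : V}

theorem same_type_contra (hk : 4 ≤ k) (hG : IsCritical k G) (huv : u ≠ v)
    {K₁ K₂ : Set V} (h1C : K₁ ⊆ ({u,v}ᶜ : Set V)) (h2C : K₂ ⊆ ({u,v}ᶜ : Set V))
    (h1ne : K₁.Nonempty) (h2ne : K₂.Nonempty) (hdisj : ∀ z, z ∈ K₁ → z ∉ K₂)
    (hcl1 : ∀ a ∈ K₁, ∀ b, b ∉ K₁ → b ∉ ({u, v} : Set V) → ¬ G.Adj a b)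
    {t : Bool} (hf1 : ForcedP k G u v (K₁ ∪ {u, v}) t) (hf2 : ForcedP k G u v (K₂ ∪ {u, v}) t) :
    False := by
  classical
  obtain ⟨z₁, hz₁⟩ := h1ne
  obtain ⟨z₂, hz₂⟩ := h2ne
  have huK : u ∉ K₁ := fun h => (h1C h) (by simp)
  have hvK : v ∉ K₁ := fun h => (h1C h) (by simp)
  have hP : (Set.univ \ K₁ : Set V) ≠ Set.univ := by
    intro h
    have : z₁ ∈ Set.univ \ K₁ := by rw [h]; trivial
    exact this.2 hz₁
  obtain ⟨c, hc⟩ := crit_induce hk hG hP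
  have hQne : (K₁ ∪ {u,v} : Set V) ≠ Set.univ := by
    intro h
    have : z₂ ∈ (K₁ ∪ {u,v} : Set V) := by rw [h]; trivial
    rcases this with h' | h'
    · exact hdisj z₂ h' hz₂
    · exact (h2C hz₂) h'
  obtain ⟨d, hd⟩ := crit_induce hk hG hQne
  have hsub : (K₂ ∪ {u,v} : Set V) ⊆ Set.univ \ K₁ := by
    rintro z (hz | hz)
    · exact ⟨trivial, fun h => hdisj z h hz⟩
    · rcases hz with h | h <;> subst h
      · exact ⟨trivial, huK⟩
      · exact ⟨trivial, hvK⟩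
  have hpatc : c u = c v ↔ t = true := hf2 c (properOn_mono hc hsub)
  have hpatd : d u = d v ↔ t = true := hf1 d hd
  have hPQ : (Set.univ \ K₁ : Set V) ∪ (K₁ ∪ {u,v}) = Set.univ := by
    ext z; simp only [Set.mem_union, Set.mem_diff, Set.mem_univ, true_and, Set.mem_singleton_iff]
    tauto
  have hI : (Set.univ \ K₁ : Set V) ∩ (K₁ ∪ {u,v}) ⊆ ({u,v} : Set V) := by
    rintro z ⟨⟨_, hzK⟩, hz2⟩
    rcases hz2 with h | h
    · exact absurd h hzK
    · exact h
  have hsep : ∀ a ∈ (Set.univ \ K₁ : Set V), a ∉ K₁ ∪ ({u,v} : Set V) →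
      ∀ b ∈ K₁ ∪ ({u,v} : Set V), b ∉ (Set.univ \ K₁ : Set V) → ¬ G.Adj a b := by
    intro a _ haQ b hbQ hbP hab
    have hbK : b ∈ K₁ := by
      rcases hbQ with h | h
      · exact h
      · exact absurd ⟨trivial, fun hk' => (h1C hk') h⟩ hbP
    exact hcl1 b hbK a (fun h => haQ (Or.inl h)) (fun h => haQ (Or.inr h)) hab.symm
  exact glue_contra hk hG hPQ hI ⟨trivial, huK⟩ ⟨trivial, hvK⟩ (Or.inr (by simp))
    (Or.inr (by simp)) hsep c d hc hd (hpatc.trans hpatd.symm)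

theorem opposite_contra (hk : 4 ≤ k) (hG : IsCritical k G)
    {K₁ K₂ : Set V} {z : V} (hz1 : z ∉ K₁) (hz2 : z ∉ K₂) (hzuv : z ∉ ({u,v} : Set V))
    {t : Bool} (hf1 : ForcedP k G u v (K₁ ∪ {u, v}) t) (hf2 : ForcedP k G u v (K₂ ∪ {u, v}) (!t)) :
    False := by
  have hS : (K₁ ∪ K₂ ∪ {u,v} : Set V) ≠ Set.univ := by
    intro h
    have : z ∈ (K₁ ∪ K₂ ∪ {u,v} : Set V) := by rw [h]; trivial
    rcases this with (h' | h') | h'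
    · exact hz1 h'
    · exact hz2 h'
    · exact hzuv h'
  obtain ⟨c, hc⟩ := crit_induce hk hG hS
  have h1 : c u = c v ↔ t = true := hf1 c (properOn_mono hc (by intro z hz; rcases hz with h | h; exact Or.inl (Or.inl h); exact Or.inr h))
  have h2 : c u = c v ↔ (!t) = true := hf2 c (properOn_mono hc (by intro z hz; rcases hz with h | h; exact Or.inl (Or.inr h); exact Or.inr h))
  rcases Bool.eq_false_or_eq_true t with h | h <;> subst h <;> simp at h1 h2 <;> first | exact h2 h1 | exact h1 h2
end
set_option linter.unusedSectionVars false
set_option linter.unusedVariables false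
section
variable {V : Type} [Fintype V] {k : ℕ} {G : SimpleGraph V} {u v : V}

theorem critA (hk : 4 ≤ k) (hG : IsCritical k G) (huv : u ≠ v) (hnadj : ¬ G.Adj u v)
    {A B : Set V} (hu₁ : u ∈ A) (hv₁ : v ∈ A)
    (hAuniv : A ≠ Set.univ) (hABI : A ∩ B = {u, v})
    (hfA : ForcedP k G u v A true) (hfB : ForcedP k G u v B false) :
    IsCritical k (addEdge (G.induce A) ⟨u, hu₁⟩ ⟨v, hv₁⟩) := by
  classical
  have hne : (⟨u, hu₁⟩ : ↥A) ≠ ⟨v, hv₁⟩ := fun h => huv (congrArg Subtype.val h)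
  have adj_iff : ∀ a b : ↥A, (addEdge (G.induce A) ⟨u, hu₁⟩ ⟨v, hv₁⟩).Adj a b ↔
      (G.Adj a.1 b.1 ∨ ((a = ⟨u, hu₁⟩ ∧ b = ⟨v, hv₁⟩) ∨ (a = ⟨v, hv₁⟩ ∧ b = ⟨u, hu₁⟩))) := by
    intro a b
    simp only [addEdge, sup_adj, fromEdgeSet_adj, Set.mem_singleton_iff, Sym2.eq_iff,
      comap_adj, Function.Embedding.coe_subtype]
    constructor
    · rintro (h | ⟨(⟨h1, h2⟩ | ⟨h1, h2⟩), hab⟩)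
      · exact Or.inl h
      · exact Or.inr (Or.inl ⟨h1, h2⟩)
      · exact Or.inr (Or.inr ⟨h1, h2⟩)
    · rintro (h | (⟨h1, h2⟩ | ⟨h1, h2⟩))
      · exact Or.inl h
      · exact Or.inr ⟨Or.inl ⟨h1, h2⟩, h1 ▸ h2 ▸ hne⟩
      · exact Or.inr ⟨Or.inr ⟨h1, h2⟩, h1 ▸ h2 ▸ hne.symm⟩
  constructor
  · rintro ⟨Col⟩
    set c : V → Fin (k-1) := fun z => if h : z ∈ A then Col ⟨z, h⟩ else ⟨0, by omega⟩ with hcdef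
    have hPc : ProperOn G A c := by
      intro a ha b hb hab
      simp only [hcdef, dif_pos ha, dif_pos hb]
      exact Col.valid ((adj_iff ⟨a, ha⟩ ⟨b, hb⟩).2 (Or.inl hab))
    have heq := (hfA c hPc).2 rfl
    simp only [hcdef, dif_pos hu₁, dif_pos hv₁] at heq
    exact Col.valid ((adj_iff _ _).2 (Or.inr (Or.inl ⟨rfl, rfl⟩))) heq
  · intro H hH
    have finish : ∀ c : V → Fin (k-1), (∀ a b : ↥A, H.Adj a b → c a.1 ≠ c b.1) →
        H.coe.Colorable (k-1) := by
      intro c key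
      exact ⟨Coloring.mk (fun z => c z.1.1) (fun {a b} hab => key _ _ (by simpa using hab))⟩
    rcases subgraph_ne_top hH with ⟨w, hw⟩ | ⟨x, y, hxy, hnxy⟩
    · by_cases hwu : (w : V) = u
      · have hS : A \ {u} ≠ Set.univ := by
          intro h
          exact (by rw [h]; trivial : u ∈ A \ {u}).2 rfl
        obtain ⟨c, hc⟩ := crit_induce hk hG hS
        refine finish c ?_
        intro a b hab
        have haH := H.edge_vert hab
        have hbH := H.edge_vert hab.symm
        have hau : a.1 ≠ u := fun h => hw (by rwa [← show a = w from Subtype.ext (h.trans hwu.symm)] )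
        have hbu : b.1 ≠ u := fun h => hw (by rwa [← show b = w from Subtype.ext (h.trans hwu.symm)] )
        rcases (adj_iff a b).1 (H.adj_sub hab) with h | (⟨h1, h2⟩ | ⟨h1, h2⟩)
        · exact hc a.1 ⟨a.2, hau⟩ b.1 ⟨b.2, hbu⟩ h
        · exact absurd (congrArg Subtype.val h1) hau
        · exact absurd (congrArg Subtype.val h2) hbu
      · by_cases hwv : (w : V) = v
        · have hS : A \ {v} ≠ Set.univ := by
            intro h
            exact (by rw [h]; trivial : v ∈ A \ {v}).2 rfl
          obtain ⟨c, hc⟩ := crit_induce hk hG hS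
          refine finish c ?_
          intro a b hab
          have haH := H.edge_vert hab
          have hbH := H.edge_vert hab.symm
          have hav : a.1 ≠ v := fun h => hw (by rwa [← show a = w from Subtype.ext (h.trans hwv.symm)] )
          have hbv : b.1 ≠ v := fun h => hw (by rwa [← show b = w from Subtype.ext (h.trans hwv.symm)] )
          rcases (adj_iff a b).1 (H.adj_sub hab) with h | (⟨h1, h2⟩ | ⟨h1, h2⟩)
          · exact hc a.1 ⟨a.2, hav⟩ b.1 ⟨b.2, hbv⟩ h
          · exact absurd (congrArg Subtype.val h2) hbv
          · exact absurd (congrArg Subtype.val h1) hav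
        · have hS : Set.univ \ {(w : V)} ≠ Set.univ := by
            intro h
            exact (by rw [h]; trivial : (w:V) ∈ Set.univ \ {(w:V)}).2 rfl
          obtain ⟨c, hc⟩ := crit_induce hk hG hS
          have hwB : (w : V) ∉ B := by
            intro h
            have h2 : (w : V) ∈ A ∩ B := ⟨w.2, h⟩
            rw [hABI] at h2
            rcases h2 with h' | h'
            · exact hwu h'
            · exact hwv h'
          have hcuv : c u ≠ c v := by
            intro h
            have hBsub : B ⊆ Set.univ \ {(w : V)} := fun z hz =>
              ⟨trivial, fun he => hwB (Set.mem_singleton_iff.1 he ▸ hz)⟩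
            simpa using (hfB c (properOn_mono hc hBsub)).1 h
          refine finish c ?_
          intro a b hab
          have haH := H.edge_vert hab
          have hbH := H.edge_vert hab.symm
          have haw : a.1 ≠ (w : V) := fun h => hw (by rwa [← show a = w from Subtype.ext h])
          have hbw : b.1 ≠ (w : V) := fun h => hw (by rwa [← show b = w from Subtype.ext h])
          rcases (adj_iff a b).1 (H.adj_sub hab) with h | (⟨h1, h2⟩ | ⟨h1, h2⟩)
          · exact hc a.1 ⟨trivial, haw⟩ b.1 ⟨trivial, hbw⟩ h
          · rw [congrArg Subtype.val h1, congrArg Subtype.val h2]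
            exact hcuv
          · rw [congrArg Subtype.val h1, congrArg Subtype.val h2]
            exact fun h => hcuv h.symm
    · by_cases hxyG : G.Adj x.1 y.1
      · obtain ⟨c, hc⟩ := crit_deleteEdge hk hG hxyG
        have hBe : ProperOn G B c := by
          intro a ha b hb hab
          refine hc a b hab ?_
          intro he
          have hmem : a ∈ ({u,v} : Set V) ∧ b ∈ ({u,v} : Set V) := by
            rcases Sym2.eq_iff.1 he with ⟨h1, h2⟩ | ⟨h1, h2⟩
            · constructor
              · rw [← hABI]; exact ⟨h1 ▸ x.2, ha⟩
              · rw [← hABI]; exact ⟨h2 ▸ y.2, hb⟩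
            · constructor
              · rw [← hABI]; exact ⟨h1 ▸ y.2, ha⟩
              · rw [← hABI]; exact ⟨h2 ▸ x.2, hb⟩
          rcases hmem.1 with h1 | h1 <;> rcases hmem.2 with h2 | h2 <;> subst h1 <;> subst h2
          · exact hab.ne rfl
          · exact hnadj hab
          · exact hnadj hab.symm
          · exact hab.ne rfl
        have hcuv : c u ≠ c v := fun h => by simpa using (hfB c hBe).1 h
        refine finish c ?_
        intro a b hab
        rcases (adj_iff a b).1 (H.adj_sub hab) with h | (⟨h1, h2⟩ | ⟨h1, h2⟩)
        · refine hc a.1 b.1 h ?_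
          intro he
          rcases Sym2.eq_iff.1 he with ⟨h1, h2⟩ | ⟨h1, h2⟩
          · exact hnxy ((Subtype.ext h1 : a = x) ▸ (Subtype.ext h2 : b = y) ▸ hab)
          · exact hnxy (((Subtype.ext h1 : a = y) ▸ (Subtype.ext h2 : b = x) ▸ hab).symm)
        · rw [congrArg Subtype.val h1, congrArg Subtype.val h2]
          exact hcuv
        · rw [congrArg Subtype.val h1, congrArg Subtype.val h2]
          exact fun h => hcuv h.symm
      · obtain ⟨c, hc⟩ := crit_induce hk hG hAuniv
        have hxyuv : (x = ⟨u, hu₁⟩ ∧ y = ⟨v, hv₁⟩) ∨ (x = ⟨v, hv₁⟩ ∧ y = ⟨u, hu₁⟩) := by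
          rcases (adj_iff x y).1 hxy with h | h
          · exact absurd h hxyG
          · exact h
        refine finish c ?_
        intro a b hab
        rcases (adj_iff a b).1 (H.adj_sub hab) with h | (⟨h1, h2⟩ | ⟨h1, h2⟩)
        · exact hc a.1 a.2 b.1 b.2 h
        · rcases hxyuv with ⟨hx, hy⟩ | ⟨hx, hy⟩
          · rw [h1.trans hx.symm, h2.trans hy.symm] at hab; exact absurd hab hnxy
          · rw [h1.trans hy.symm, h2.trans hx.symm] at hab; exact absurd hab.symm hnxy
        · rcases hxyuv with ⟨hx, hy⟩ | ⟨hx, hy⟩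
          · rw [h1.trans hy.symm, h2.trans hx.symm] at hab; exact absurd hab.symm hnxy
          · rw [h1.trans hx.symm, h2.trans hy.symm] at hab; exact absurd hab hnxy
end
set_option linter.unusedSectionVars false
set_option linter.unusedVariables false
section
variable {V : Type} [Fintype V] {k : ℕ} {G : SimpleGraph V} {u v : V}

theorem critB (hk : 4 ≤ k) (hG : IsCritical k G) (huv : u ≠ v) (hnadj : ¬ G.Adj u v)
    {A B : Set V} (hu₂ : u ∈ B) (hv₂ : v ∈ B)
    (hABI : A ∩ B = {u, v})
    (hfA : ForcedP k G u v A true) (hfB : ForcedP k G u v B false) :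
    IsCritical k (identify (G.induce B) ⟨u, hu₂⟩ ⟨v, hv₂⟩) := by
  classical
  have adj_iff : ∀ a b : {x : ↥B // x ≠ (⟨v, hv₂⟩ : ↥B)},
      (identify (G.induce B) ⟨u, hu₂⟩ ⟨v, hv₂⟩).Adj a b ↔
      (a.1.1 ≠ b.1.1 ∧ (G.Adj a.1.1 b.1.1 ∨ (a.1.1 = u ∧ G.Adj v b.1.1) ∨
        (b.1.1 = u ∧ G.Adj a.1.1 v))) := by
    intro a b
    constructor
    · rintro ⟨h1, h⟩
      refine ⟨fun he => h1 (Subtype.ext he), ?_⟩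
      rcases h with h | ⟨h2, h3⟩ | ⟨h2, h3⟩
      · exact Or.inl h
      · exact Or.inr (Or.inl ⟨congrArg Subtype.val h2, h3⟩)
      · exact Or.inr (Or.inr ⟨congrArg Subtype.val h2, h3⟩)
    · rintro ⟨h1, h⟩
      refine ⟨fun he => h1 (congrArg Subtype.val he), ?_⟩
      rcases h with h | ⟨h2, h3⟩ | ⟨h2, h3⟩
      · exact Or.inl h
      · exact Or.inr (Or.inl ⟨Subtype.ext h2, h3⟩)
      · exact Or.inr (Or.inr ⟨Subtype.ext h2, h3⟩)
  have vinj : ∀ a b : {x : ↥B // x ≠ (⟨v, hv₂⟩ : ↥B)}, a.1.1 = b.1.1 → a = b :=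
    fun a b h => Subtype.ext (Subtype.ext h)
  have hvne : ∀ a : {x : ↥B // x ≠ (⟨v, hv₂⟩ : ↥B)}, a.1.1 ≠ v :=
    fun a h => a.2 (Subtype.ext h)
  set u0 : {x : ↥B // x ≠ (⟨v, hv₂⟩ : ↥B)} :=
    ⟨⟨u, hu₂⟩, fun h => huv (congrArg Subtype.val h)⟩ with hu0
  have mkcuv : ∀ (p q r : V), (r = p ∨ r = q) → r ∈ B → r ≠ u → r ≠ v →
      ∀ c : V → Fin (k-1), (∀ a b, G.Adj a b → s(a,b) ≠ s(p,q) → c a ≠ c b) → c u = c v := by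
    intro p q r hr hrB hru hrv c hc
    have hrA : r ∉ A := by
      intro h
      have h2 : r ∈ A ∩ B := ⟨h, hrB⟩
      rw [hABI] at h2
      rcases h2 with h' | h'
      · exact hru h'
      · exact hrv h'
    have hp : ProperOn G A c := by
      intro a ha b hb hab
      refine hc a b hab (fun he => ?_)
      rcases Sym2.eq_iff.1 he with ⟨h1, h2⟩ | ⟨h1, h2⟩ <;> rcases hr with h | h <;> subst h
      · exact hrA (h1 ▸ ha)
      · exact hrA (h2 ▸ hb)
      · exact hrA (h2 ▸ hb)
      · exact hrA (h1 ▸ ha)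
    exact (hfA c hp).2 rfl
  constructor
  · rintro ⟨Col⟩
    let c : V → Fin (k-1) := fun z =>
      if h : z ∈ B ∧ z ≠ v then Col ⟨⟨z, h.1⟩, fun q => h.2 (congrArg Subtype.val q)⟩
      else Col u0
    have hcv : c v = Col u0 := dif_neg (by simp)
    have hcu : c u = Col u0 := dif_pos ⟨hu₂, huv⟩
    have hcw : ∀ (z : V) (hz : z ∈ B) (hzv : z ≠ v),
        c z = Col ⟨⟨z, hz⟩, fun q => hzv (congrArg Subtype.val q)⟩ :=
      fun z hz hzv => dif_pos ⟨hz, hzv⟩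
    have hp : ProperOn G B c := by
      intro a ha b hb hab
      by_cases hav : a = v
      · by_cases hbu : b = u
        · rw [hav, hbu] at hab; exact absurd hab.symm hnadj
        · have hbv : b ≠ v := fun h => hab.ne (hav.trans h.symm)
          rw [hav, hcv, hcw b hb hbv]
          exact Col.valid ((adj_iff _ _).2
            ⟨fun h => hbu h.symm, Or.inr (Or.inl ⟨rfl, (hav ▸ hab : G.Adj v b)⟩)⟩)
      · by_cases hbv : b = v
        · by_cases hau : a = u
          · rw [hau, hbv] at hab; exact absurd hab hnadj
          · rw [hbv, hcv, hcw a ha hav]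
            exact Col.valid ((adj_iff _ _).2
              ⟨hau, Or.inr (Or.inr ⟨rfl, (hbv ▸ hab : G.Adj a v)⟩)⟩)
        · rw [hcw a ha hav, hcw b hb hbv]
          exact Col.valid ((adj_iff _ _).2 ⟨hab.ne, Or.inl hab⟩)
    simpa using (hfB c hp).1 (hcu.trans hcv.symm)
  · intro H hH
    have finish : ∀ c : V → Fin (k-1),
        (∀ a b : {x : ↥B // x ≠ (⟨v, hv₂⟩ : ↥B)}, H.Adj a b → c a.1.1 ≠ c b.1.1) →
        H.coe.Colorable (k-1) := by
      intro c key
      exact ⟨Coloring.mk (fun z => c z.1.1.1) (fun {a b} hab => key _ _ (by simpa using hab))⟩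
    rcases subgraph_ne_top hH with ⟨w, hw⟩ | ⟨x, y, hxy, hnxy⟩
    · by_cases hwu : w.1.1 = u
      · have hS : B \ {u, v} ≠ Set.univ := by
          intro h
          exact (by rw [h]; trivial : u ∈ B \ {u,v}).2 (Set.mem_insert _ _)
        obtain ⟨c, hc⟩ := crit_induce hk hG hS
        refine finish c ?_
        intro a b hab
        have haH := H.edge_vert hab
        have hbH := H.edge_vert hab.symm
        have hau : a.1.1 ≠ u := fun h => hw (vinj a w (h.trans hwu.symm) ▸ haH)
        have hbu : b.1.1 ≠ u := fun h => hw (vinj b w (h.trans hwu.symm) ▸ hbH)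
        obtain ⟨hne', hd⟩ := (adj_iff a b).1 (H.adj_sub hab)
        rcases hd with h | ⟨h1, h2⟩ | ⟨h1, h2⟩
        · exact hc a.1.1 ⟨a.1.2, fun hm => (Set.mem_insert_iff.1 hm).elim hau (hvne a)⟩
            b.1.1 ⟨b.1.2, fun hm => (Set.mem_insert_iff.1 hm).elim hbu (hvne b)⟩ h
        · exact absurd h1 hau
        · exact absurd h1 hbu
      · have hS : Set.univ \ {w.1.1} ≠ Set.univ := by
          intro h
          exact (by rw [h]; trivial : w.1.1 ∈ Set.univ \ {w.1.1}).2 rfl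
        obtain ⟨c, hc⟩ := crit_induce hk hG hS
        have hw0A : w.1.1 ∉ A := by
          intro h
          have h2 : w.1.1 ∈ A ∩ B := ⟨h, w.1.2⟩
          rw [hABI] at h2
          rcases h2 with h' | h'
          · exact hwu h'
          · exact hvne w h'
        have hcuv : c u = c v :=
          (hfA c (properOn_mono hc (fun z hz =>
            ⟨trivial, fun he => hw0A (Set.mem_singleton_iff.1 he ▸ hz)⟩))).2 rfl
        refine finish c ?_
        intro a b hab
        have haH := H.edge_vert hab
        have hbH := H.edge_vert hab.symm
        have haw : a.1.1 ≠ w.1.1 := fun h => hw (vinj a w h ▸ haH)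
        have hbw : b.1.1 ≠ w.1.1 := fun h => hw (vinj b w h ▸ hbH)
        have hvw : v ≠ w.1.1 := fun h => hvne w h.symm
        obtain ⟨hne', hd⟩ := (adj_iff a b).1 (H.adj_sub hab)
        rcases hd with h | ⟨h1, h2⟩ | ⟨h1, h2⟩
        · exact hc a.1.1 ⟨trivial, fun he => haw (Set.mem_singleton_iff.1 he)⟩
            b.1.1 ⟨trivial, fun he => hbw (Set.mem_singleton_iff.1 he)⟩ h
        · rw [h1, hcuv]
          exact hc v ⟨trivial, fun he => hvw (Set.mem_singleton_iff.1 he)⟩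
            b.1.1 ⟨trivial, fun he => hbw (Set.mem_singleton_iff.1 he)⟩ h2
        · rw [h1, hcuv]
          exact hc a.1.1 ⟨trivial, fun he => haw (Set.mem_singleton_iff.1 he)⟩
            v ⟨trivial, fun he => hvw (Set.mem_singleton_iff.1 he)⟩ h2
    · obtain ⟨hnexy, hd⟩ := (adj_iff x y).1 hxy
      rcases hd with hE | ⟨hE1, hE2⟩ | ⟨hE1, hE2⟩
      · -- missing edge corresponds to a G-edge inside B (not touching the merge)
        obtain ⟨c, hc⟩ := crit_deleteEdge hk hG hE
        have hone : ∃ r, (r = x.1.1 ∨ r = y.1.1) ∧ r ∈ B ∧ r ≠ u ∧ r ≠ v := by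
          by_cases hxu : x.1.1 = u
          · exact ⟨y.1.1, Or.inr rfl, y.1.2, fun h => hnexy (hxu.trans h.symm), hvne y⟩
          · exact ⟨x.1.1, Or.inl rfl, x.1.2, hxu, hvne x⟩
        obtain ⟨r, hr, hrB, hru, hrv⟩ := hone
        have hcuv := mkcuv x.1.1 y.1.1 r hr hrB hru hrv c hc
        refine finish c ?_
        intro a b hab
        obtain ⟨hne', hd'⟩ := (adj_iff a b).1 (H.adj_sub hab)
        rcases hd' with h | ⟨h1, h2⟩ | ⟨h1, h2⟩
        · refine hc _ _ h (fun he => ?_)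
          rcases Sym2.eq_iff.1 he with ⟨e1, e2⟩ | ⟨e1, e2⟩
          · rw [vinj a x e1, vinj b y e2] at hab; exact hnxy hab
          · rw [vinj a y e1, vinj b x e2] at hab; exact hnxy hab.symm
        · rw [h1, hcuv]
          refine hc v b.1.1 h2 (fun he => ?_)
          rcases Sym2.eq_iff.1 he with ⟨e1, e2⟩ | ⟨e1, e2⟩
          · exact hvne x e1.symm
          · exact hvne y e1.symm
        · rw [h1, hcuv]
          refine hc a.1.1 v h2 (fun he => ?_)
          rcases Sym2.eq_iff.1 he with ⟨e1, e2⟩ | ⟨e1, e2⟩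
          · exact hvne y e2.symm
          · exact hvne x e2.symm
      · -- missing edge comes from a G-edge (v, y)
        obtain ⟨c, hc⟩ := crit_deleteEdge hk hG hE2
        have hcuv := mkcuv v y.1.1 y.1.1 (Or.inr rfl) y.1.2
          (fun h => hnexy (hE1.trans h.symm)) (hvne y) c hc
        refine finish c ?_
        intro a b hab
        obtain ⟨hne', hd'⟩ := (adj_iff a b).1 (H.adj_sub hab)
        rcases hd' with h | ⟨h1, h2⟩ | ⟨h1, h2⟩
        · refine hc _ _ h (fun he => ?_)
          rcases Sym2.eq_iff.1 he with ⟨e1, e2⟩ | ⟨e1, e2⟩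
          · exact hvne a e1
          · exact hvne b e2
        · rw [h1, hcuv]
          refine hc v b.1.1 h2 (fun he => ?_)
          rcases Sym2.eq_iff.1 he with ⟨e1, e2⟩ | ⟨e1, e2⟩
          · rw [vinj a x (h1.trans hE1.symm), vinj b y e2] at hab; exact hnxy hab
          · exact hvne y e1.symm
        · rw [h1, hcuv]
          refine hc a.1.1 v h2 (fun he => ?_)
          rcases Sym2.eq_iff.1 he with ⟨e1, e2⟩ | ⟨e1, e2⟩
          · exact hvne a e1
          · rw [vinj a y e1, vinj b x (h1.trans hE1.symm)] at hab; exact hnxy hab.symm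
      · -- missing edge comes from a G-edge (x, v)
        obtain ⟨c, hc⟩ := crit_deleteEdge hk hG hE2
        have hcuv := mkcuv x.1.1 v x.1.1 (Or.inl rfl) x.1.2
          (fun h => hnexy (h.trans hE1.symm)) (hvne x) c hc
        refine finish c ?_
        intro a b hab
        obtain ⟨hne', hd'⟩ := (adj_iff a b).1 (H.adj_sub hab)
        rcases hd' with h | ⟨h1, h2⟩ | ⟨h1, h2⟩
        · refine hc _ _ h (fun he => ?_)
          rcases Sym2.eq_iff.1 he with ⟨e1, e2⟩ | ⟨e1, e2⟩
          · exact hvne b e2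
          · exact hvne a e1
        · rw [h1, hcuv]
          refine hc v b.1.1 h2 (fun he => ?_)
          rcases Sym2.eq_iff.1 he with ⟨e1, e2⟩ | ⟨e1, e2⟩
          · exact hvne x e1.symm
          · rw [vinj a y (h1.trans hE1.symm), vinj b x e2] at hab; exact hnxy hab.symm
        · rw [h1, hcuv]
          refine hc a.1.1 v h2 (fun he => ?_)
          rcases Sym2.eq_iff.1 he with ⟨e1, e2⟩ | ⟨e1, e2⟩
          · rw [vinj a x e1, vinj b y (h1.trans hE1.symm)] at hab; exact hnxy hab
          · exact hvne a e1
end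
set_option linter.unusedSectionVars false
set_option linter.unusedVariables false
set_option maxHeartbeats 1000000
section
variable {V : Type} [Fintype V] {k : ℕ} {G : SimpleGraph V} {u v : V}

theorem assemble (hk : 4 ≤ k) (hG : IsCritical k G) (huv : u ≠ v)
    {Ka Kb : Set V}
    (haC : Ka ⊆ ({u,v}ᶜ : Set V)) (hbC : Kb ⊆ ({u,v}ᶜ : Set V))
    (hane : Ka.Nonempty) (hbne : Kb.Nonempty)
    (hdisj : ∀ z, z ∈ Ka → z ∉ Kb)
    (hcover : ({u,v}ᶜ : Set V) ⊆ Ka ∪ Kb)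
    (hacl : ∀ a ∈ Ka, ∀ b, b ∉ Ka → b ∉ ({u,v} : Set V) → ¬ G.Adj a b)
    (hbcl : ∀ a ∈ Kb, ∀ b, b ∉ Kb → b ∉ ({u,v} : Set V) → ¬ G.Adj a b)
    (hconA : (G.induce Ka).Connected) (hconB : (G.induce Kb).Connected)
    (hfA : ForcedP k G u v (Ka ∪ {u,v}) true) (hfB : ForcedP k G u v (Kb ∪ {u,v}) false) :
    ∃ (A B : Set V) (hu₁ : u ∈ A) (hv₁ : v ∈ A) (hu₂ : u ∈ B) (hv₂ : v ∈ B),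
      A ∪ B = Set.univ ∧
      A ∩ B = {u, v} ∧
      A ≠ Set.univ ∧
      B ≠ Set.univ ∧
      (A \ {u, v}).Nonempty ∧
      (B \ {u, v}).Nonempty ∧
      (G.induce (A \ {u, v})).Connected ∧
      (G.induce (B \ {u, v})).Connected ∧
      (∀ a ∈ A \ {u, v}, ∀ b ∈ B \ {u, v}, ¬ G.Adj a b) ∧
      ¬ G.Adj u v ∧
      (∀ w ∈ B \ {u, v}, ¬ (G.Adj u w ∧ G.Adj v w)) ∧
      IsCritical k (addEdge (G.induce A) ⟨u, hu₁⟩ ⟨v, hv₁⟩) ∧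
      IsCritical k (identify (G.induce B) ⟨u, hu₂⟩ ⟨v, hv₂⟩) := by
  classical
  set A : Set V := Ka ∪ {u, v} with hA
  set B : Set V := Kb ∪ {u, v} with hB
  have huvset : u ∈ ({u, v} : Set V) := Set.mem_insert _ _
  have hvvset : v ∈ ({u, v} : Set V) := Set.mem_insert_iff.2 (Or.inr rfl)
  have hu₁ : u ∈ A := Or.inr huvset
  have hv₁ : v ∈ A := Or.inr hvvset
  have hu₂ : u ∈ B := Or.inr huvset
  have hv₂ : v ∈ B := Or.inr hvvset
  have hanuv : ∀ z ∈ Ka, z ∉ ({u,v} : Set V) := fun z hz => haC hz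
  have hbnuv : ∀ z ∈ Kb, z ∉ ({u,v} : Set V) := fun z hz => hbC hz
  have hAd : A \ {u, v} = Ka := by
    ext z
    constructor
    · rintro ⟨hz1 | hz1, hz2⟩
      · exact hz1
      · exact absurd hz1 hz2
    · exact fun hz => ⟨Or.inl hz, hanuv z hz⟩
  have hBd : B \ {u, v} = Kb := by
    ext z
    constructor
    · rintro ⟨hz1 | hz1, hz2⟩
      · exact hz1
      · exact absurd hz1 hz2
    · exact fun hz => ⟨Or.inl hz, hbnuv z hz⟩
  have hbna : ∀ z ∈ Kb, z ∉ Ka := fun z hz h => hdisj z h hz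
  have hABI : A ∩ B = {u, v} := by
    ext z
    constructor
    · rintro ⟨hz1 | hz1, hz2 | hz2⟩
      · exact absurd hz2 (hdisj z hz1)
      · exact absurd hz2 (hanuv z hz1)
      · exact absurd hz1 (hbnuv z hz2)
      · exact hz1
    · exact fun hz => ⟨Or.inr hz, Or.inr hz⟩
  have hAuniv : A ≠ Set.univ := by
    obtain ⟨b₀, hb₀⟩ := hbne
    intro h
    have : b₀ ∈ A := by rw [h]; trivial
    rcases this with h' | h'
    · exact hbna b₀ hb₀ h'
    · exact hbnuv b₀ hb₀ h'
  have hBuniv : B ≠ Set.univ := by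
    obtain ⟨a₀, ha₀⟩ := hane
    intro h
    have : a₀ ∈ B := by rw [h]; trivial
    rcases this with h' | h'
    · exact hdisj a₀ ha₀ h'
    · exact hanuv a₀ ha₀ h'
  have hnadj : ¬ G.Adj u v := by
    obtain ⟨c, hc⟩ := crit_induce hk hG hAuniv
    intro h
    exact hc u hu₁ v hv₁ h ((hfA c hc).2 rfl)
  have hncn : ∀ w ∈ B \ {u, v}, ¬ (G.Adj u w ∧ G.Adj v w) := by
    rw [hBd]
    rintro w hw ⟨huw, hvw⟩
    have hwA : w ∉ A := by
      rintro (h | h)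
      · exact hbna w hw h
      · exact hbnuv w hw h
    obtain ⟨c, hc⟩ := crit_deleteEdge hk hG huw
    have hpA : ProperOn G A c := by
      intro a ha b hb hab
      refine hc a b hab (fun he => ?_)
      rcases Sym2.eq_iff.1 he with ⟨h1, h2⟩ | ⟨h1, h2⟩
      · exact hwA (h2 ▸ hb)
      · exact hwA (h1 ▸ ha)
    have hcuv : c u = c v := (hfA c hpA).2 rfl
    have hvwne : v ≠ w := fun h => hbnuv w hw (h ▸ hvvset)
    have hcvw : c v ≠ c w := by
      refine hc v w hvw (fun he => ?_)
      rcases Sym2.eq_iff.1 he with ⟨h1, h2⟩ | ⟨h1, h2⟩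
      · exact huv h1.symm
      · exact hvwne h1
    refine hG.1 (colorable_of_fun c (fun a b hab => ?_))
    by_cases he : s(a, b) = s(u, w)
    · rcases Sym2.eq_iff.1 he with ⟨h1, h2⟩ | ⟨h1, h2⟩
      · rw [h1, h2, hcuv]; exact hcvw
      · rw [h1, h2, hcuv]; exact fun h => hcvw h.symm
    · exact hc a b hab he
  refine ⟨A, B, hu₁, hv₁, hu₂, hv₂, ?_, hABI, hAuniv, hBuniv, ?_, ?_, ?_, ?_, ?_, hnadj, hncn,
    ?_, ?_⟩
  · ext z
    simp only [Set.mem_union, Set.mem_univ, iff_true]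
    by_cases hz : z ∈ ({u, v} : Set V)
    · exact Or.inl (Or.inr hz)
    · rcases hcover hz with h | h
      · exact Or.inl (Or.inl h)
      · exact Or.inr (Or.inl h)
  · rw [hAd]; exact hane
  · rw [hBd]; exact hbne
  · rw [hAd]; exact hconA
  · rw [hBd]; exact hconB
  · rw [hAd, hBd]
    intro a ha b hb
    exact hacl a ha b (hbna b hb) (hbnuv b hb)
  · exact critA hk hG huv hnadj hu₁ hv₁ hAuniv hABI hfA hfB
  · exact critB hk hG huv hnadj hu₂ hv₂ hABI hfA hfB
end

set_option linter.unusedSectionVars false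
set_option linter.unusedVariables false
theorem stmt10 (k : ℕ) (hk : 4 ≤ k)
    (V : Type) [Fintype V] (G : SimpleGraph V) (hG : IsCritical k G)
    (u v : V) (huv : u ≠ v)
    (hdisc : ¬ (G.induce ({u, v}ᶜ : Set V)).Connected) :
    ∃ (A B : Set V) (hu₁ : u ∈ A) (hv₁ : v ∈ A) (hu₂ : u ∈ B) (hv₂ : v ∈ B),
      A ∪ B = Set.univ ∧
      A ∩ B = {u, v} ∧
      A ≠ Set.univ ∧
      B ≠ Set.univ ∧
      (A \ {u, v}).Nonempty ∧
      (B \ {u, v}).Nonempty ∧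
      (G.induce (A \ {u, v})).Connected ∧
      (G.induce (B \ {u, v})).Connected ∧
      (∀ a ∈ A \ {u, v}, ∀ b ∈ B \ {u, v}, ¬ G.Adj a b) ∧
      ¬ G.Adj u v ∧
      (∀ w ∈ B \ {u, v}, ¬ (G.Adj u w ∧ G.Adj v w)) ∧
      IsCritical k (addEdge (G.induce A) ⟨u, hu₁⟩ ⟨v, hv₁⟩) ∧
      IsCritical k (identify (G.induce B) ⟨u, hu₂⟩ ⟨v, hv₂⟩) := by
  classical
  set C : Set V := ({u, v}ᶜ : Set V) with hC
  -- C is nonempty, otherwise G would be 2-colorable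
  have hCne : C.Nonempty := by
    rcases Set.eq_empty_or_nonempty C with h | h
    · exfalso
      refine hG.1 (colorable_of_fun (fun z => if z = u then ⟨0, by omega⟩ else ⟨1, by omega⟩)
        (fun a b hab => ?_))
      have hmem : ∀ z : V, z ∈ ({u, v} : Set V) := by
        intro z
        by_contra hz
        have hzC : z ∈ C := hz; rw [h] at hzC; exact Set.notMem_empty z hzC
      by_cases ha : a = u <;> by_cases hb : b = u <;>
        simp only [if_pos, if_neg, ha, hb, if_true, if_false]
      · exact absurd (ha.trans hb.symm) hab.ne
      · intro hq; simp [Fin.ext_iff] at hq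
      · intro hq; simp [Fin.ext_iff] at hq
      · have ha' : a = v := (Set.mem_insert_iff.1 (hmem a)).resolve_left ha
        have hb' : b = v := (Set.mem_insert_iff.1 (hmem b)).resolve_left hb
        exact absurd (ha'.trans hb'.symm) hab.ne
    · exact h
  obtain ⟨z₀, hz₀⟩ := hCne
  have hpre : ¬ (G.induce C).Preconnected := by
    intro hp
    exact hdisc ((SimpleGraph.connected_iff _).2 ⟨hp, ⟨⟨z₀, hz₀⟩⟩⟩)
  simp only [SimpleGraph.Preconnected, not_forall] at hpre
  obtain ⟨p, q, hpq⟩ := hpre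
  set Kp : Set V := comp G C p with hKp
  set Kq : Set V := comp G C q with hKq
  have hmemC : ∀ z ∈ C, z ∉ ({u, v} : Set V) := fun z hz => hz
  have hmemC' : ∀ z : V, z ∉ ({u, v} : Set V) → z ∈ C := fun z hz => hz
  have hpC : Kp ⊆ C := comp_subset p
  have hqC : Kq ⊆ C := comp_subset q
  have hpne : Kp.Nonempty := ⟨p.1, mem_comp_self p⟩
  have hqne : Kq.Nonempty := ⟨q.1, mem_comp_self q⟩
  have hdisjpq : ∀ z, z ∈ Kp → z ∉ Kq := by
    intro z hz1 hz2
    exact hpq (comp_inter p q hz1 hz2)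
  have haclp : ∀ a ∈ Kp, ∀ b, b ∉ Kp → b ∉ ({u,v} : Set V) → ¬ G.Adj a b := by
    intro a ha b hb hbuv hab
    exact hb (comp_adj_closed p ha (hmemC' b hbuv) hab)
  have haclq : ∀ a ∈ Kq, ∀ b, b ∉ Kq → b ∉ ({u,v} : Set V) → ¬ G.Adj a b := by
    intro a ha b hb hbuv hab
    exact hb (comp_adj_closed q ha (hmemC' b hbuv) hab)
  obtain ⟨tp, hfp⟩ := forced_dichotomy hk hG huv hpC hpne haclp
  obtain ⟨tq, hfq⟩ := forced_dichotomy hk hG huv hqC hqne haclq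
  have hne : tp ≠ tq := by
    intro h
    exact same_type_contra hk hG huv hpC hqC hpne hqne hdisjpq haclp hfp (h ▸ hfq)
  have hcover : C ⊆ Kp ∪ Kq := by
    intro z hz
    by_contra hzn
    simp only [Set.mem_union, not_or] at hzn
    obtain ⟨hzp, hzq⟩ := hzn
    set Kz : Set V := comp G C ⟨z, hz⟩ with hKz
    have hzC : Kz ⊆ C := comp_subset _
    have hzne : Kz.Nonempty := ⟨z, mem_comp_self _⟩
    have haclz : ∀ a ∈ Kz, ∀ b, b ∉ Kz → b ∉ ({u,v} : Set V) → ¬ G.Adj a b := by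
      intro a ha b hb hbuv hab
      exact hb (comp_adj_closed _ ha (hmemC' b hbuv) hab)
    obtain ⟨tz, hfz⟩ := forced_dichotomy hk hG huv hzC hzne haclz
    have hzp' : ∀ w, w ∈ Kz → w ∉ Kp := by
      intro w hw1 hw2
      exact hzp ⟨hz, (comp_inter ⟨z, hz⟩ p hw1 hw2).symm⟩
    have hzq' : ∀ w, w ∈ Kz → w ∉ Kq := by
      intro w hw1 hw2
      exact hzq ⟨hz, (comp_inter ⟨z, hz⟩ q hw1 hw2).symm⟩
    by_cases htz : tz = tp
    · -- Kz and Kq have opposite types; p.1 is outside both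
      have hfq' : ForcedP k G u v (Kq ∪ {u, v}) (!tz) := by
        have : tq = !tz := Bool.eq_not_of_ne (fun h => hne (h.trans htz).symm)
        exact this ▸ hfq
      exact opposite_contra hk hG (fun h => hzp' p.1 h (mem_comp_self p))
        (fun h => hdisjpq p.1 (mem_comp_self p) h) (hmemC p.1 p.2) hfz hfq'
    · -- Kz and Kp have opposite types; q.1 is outside both
      have hfp' : ForcedP k G u v (Kp ∪ {u, v}) (!tz) := by
        have : tp = !tz := Bool.eq_not_of_ne (fun h => htz h.symm)
        exact this ▸ hfp
      exact opposite_contra hk hG (fun h => hzq' q.1 h (mem_comp_self q))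
        (fun h => hdisjpq q.1 h (mem_comp_self q)) (hmemC q.1 q.2) hfz hfp'
  have hconp : (G.induce Kp).Connected := comp_connected p
  have hconq : (G.induce Kq).Connected := comp_connected q
  -- split on which side is forced-same
  cases htp : tp with
  | true =>
    have hfq' : ForcedP k G u v (Kq ∪ {u, v}) false := by
      have : tq = false := Bool.eq_false_iff.2 (fun h => hne (htp.trans h.symm))
      exact this ▸ hfq
    exact assemble hk hG huv hpC hqC hpne hqne hdisjpq hcover haclp haclq hconp hconq
      (htp ▸ hfp) hfq'
  | false =>
    have hfq' : ForcedP k G u v (Kq ∪ {u, v}) true := by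
      have : tq = true := by
        have h2 := Bool.eq_not_of_ne (fun h : tq = tp => hne h.symm)
        rw [htp] at h2
        simpa using h2
      exact this ▸ hfq
    refine assemble hk hG huv hqC hpC hqne hpne (fun z hz h => hdisjpq z h hz)
      (fun z hz => (hcover hz).symm) haclq haclp hconq hconp hfq' (htp ▸ hfp)
end

section
/- Let k ≥ 4 be an integer, let G be a k-critical graph, and let (T, W) be a standard tree-decomposition of G. (i) If t₀ and t₁ are adjacent in T, then the two vertices in the set W_{t₀} ∩ W_{t₁} are not adjacent in G. (ii) If t₁ and t₂ are distinct neighbors of t₀ in T, then W_{t₀} ∩ W_{t₁} ≠ W_{t₀} ∩ W_{t₂}. -/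
open SimpleGraph

/-- A graph is `t`-connected if it has at least `t+1` vertices and deleting any set of
at most `t-1` vertices leaves it connected. -/
def KConnected {V : Type*} (t : ℕ) (G : SimpleGraph V) : Prop :=
  t + 1 ≤ Nat.card V ∧ ∀ S : Set V, S.ncard ≤ t - 1 → (G.induce Sᶜ).Connected

/-- `(T, W)` is a tree-decomposition of `G`. -/
def IsTreeDecomp {V ι : Type*} (G : SimpleGraph V) (T : SimpleGraph ι)
    (W : ι → Set V) : Prop :=
  T.IsTree ∧
  (∀ v : V, ∃ t, v ∈ W t) ∧
  (∀ u v : V, G.Adj u v → ∃ t, u ∈ W t ∧ v ∈ W t) ∧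
  (∀ (t t' t'' : ι) (p : T.Walk t t''), p.IsPath → t' ∈ p.support →
    W t ∩ W t'' ⊆ W t')

/-- The torso of a tree-decomposition `(T, W)` of `G` at a node `t`: the graph on `W t`
in which two vertices are adjacent iff they are adjacent in `G` or they both lie in the
bag of a neighbour of `t`. -/
def torso {V ι : Type*} (G : SimpleGraph V) (T : SimpleGraph ι) (W : ι → Set V)
    (t : ι) : SimpleGraph (W t) where
  Adj u v := (u : V) ≠ (v : V) ∧
    (G.Adj u v ∨ ∃ t', T.Adj t t' ∧ (u : V) ∈ W t' ∧ (v : V) ∈ W t')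
  symm := ⟨by
    rintro u v ⟨hne, h | ⟨t', ht', hu, hv⟩⟩
    · exact ⟨hne.symm, Or.inl h.symm⟩
    · exact ⟨hne.symm, Or.inr ⟨t', ht', hv, hu⟩⟩⟩
  loopless := ⟨by rintro u ⟨hne, -⟩; exact hne rfl⟩

/-- The graph `H` is a cycle: it has a cycle passing through all of its vertices
and using all of its edges. -/
def IsCycleGraph {V : Type*} (H : SimpleGraph V) : Prop :=
  ∃ (v : V) (c : H.Walk v v), c.IsCycle ∧ (∀ u, u ∈ c.support) ∧
    ∀ e ∈ H.edgeSet, e ∈ c.edges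

/-- A tree-decomposition is standard if adjacent bags meet in exactly two vertices and
every torso is `3`-connected or a cycle. -/
def IsStandardTreeDecomp {V ι : Type*} (G : SimpleGraph V) (T : SimpleGraph ι)
    (W : ι → Set V) : Prop :=
  IsTreeDecomp G T W ∧
  (∀ t t' : ι, T.Adj t t' → (W t ∩ W t').ncard = 2) ∧
  (∀ t : ι, KConnected 3 (torso G T W t) ∨ IsCycleGraph (torso G T W t))


/-- permutation matching two pairs of the same "type" -/
lemma exists_perm_pair {α : Type*} [DecidableEq α] (a b a' b' : α)
    (h : a = b ↔ a' = b') : ∃ π : Equiv.Perm α, π a = a' ∧ π b = b' := by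
  by_cases hab : a = b
  · refine ⟨Equiv.swap a a', ?_, ?_⟩
    · simp
    · rw [← hab, Equiv.swap_apply_left, h.mp hab]
  · have hab' : a' ≠ b' := fun e => hab (h.mpr e)
    set σ := Equiv.swap a a' with hσ
    have hσa : σ a = a' := Equiv.swap_apply_left a a'
    have hb₁ : σ b ≠ a' := fun e => hab (σ.injective (e.trans hσa.symm)).symm
    refine ⟨σ.trans (Equiv.swap (σ b) b'), ?_, ?_⟩
    · simp only [Equiv.trans_apply, hσa]
      exact Equiv.swap_apply_of_ne_of_ne (Ne.symm hb₁) hab'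
    · simp only [Equiv.trans_apply, Equiv.swap_apply_left]

section Good
variable {V : Type} {G : SimpleGraph V}

/-- `f` is a proper partial coloring on `X`. -/
def GoodOn (G : SimpleGraph V) (X : Set V) (n : ℕ) (f : V → Fin n) : Prop :=
  ∀ ⦃u v : V⦄, u ∈ X → v ∈ X → G.Adj u v → f u ≠ f v

lemma GoodOn.mono {X Y : Set V} {n f} (h : GoodOn G X n f) (hYX : Y ⊆ X) :
    GoodOn G Y n f := fun _ _ hu hv => h (hYX hu) (hYX hv)

lemma GoodOn.perm {X : Set V} {n f} (h : GoodOn G X n f) (π : Equiv.Perm (Fin n)) :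
    GoodOn G X n (fun v => π (f v)) :=
  fun _ _ hu hv hadj => fun e => h hu hv hadj (π.injective e)

lemma colorable_of_goodOn_univ {n : ℕ} {f : V → Fin n}
    (h : GoodOn G Set.univ n f) : G.Colorable n :=
  ⟨Coloring.mk f fun hadj => h trivial trivial hadj⟩

/-- in a critical graph, every proper induced part has a good coloring -/
lemma IsCritical.exists_goodOn {k : ℕ} (hG : IsCritical k G) (hk : 4 ≤ k)
    (X : Set V) (hX : X ≠ Set.univ) : ∃ f, GoodOn G X (k - 1) f := by
  classical
  let H : G.Subgraph :=
    { verts := X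
      Adj := fun u v => u ∈ X ∧ v ∈ X ∧ G.Adj u v
      adj_sub := fun h => h.2.2
      edge_vert := fun h => h.1
      symm := ⟨fun u v h => ⟨h.2.1, h.1, h.2.2.symm⟩⟩ }
  have hne : H ≠ ⊤ := by
    intro e
    apply hX
    have : H.verts = (⊤ : G.Subgraph).verts := by rw [e]
    simpa using this
  obtain ⟨C⟩ := hG.2 H hne
  refine ⟨fun v => if h : v ∈ X then C ⟨v, h⟩ else ⟨0, by omega⟩, ?_⟩
  intro u v hu hv hadj
  simp only [dif_pos hu, dif_pos hv]
  exact C.valid (show H.Adj u v from ⟨hu, hv, hadj⟩)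

lemma glue_goodOn {n : ℕ} {P Q : Set V} {f g : V → Fin n}
    (hedge : ∀ u v, G.Adj u v → (u ∈ P ∧ v ∈ P) ∨ (u ∈ Q ∧ v ∈ Q))
    (hf : GoodOn G P n f) (hg : GoodOn G Q n g)
    (hagree : ∀ v ∈ P ∩ Q, f v = g v) : G.Colorable n := by
  classical
  set h : V → Fin n := fun v => if v ∈ P then f v else g v with hh
  have hQ : ∀ w ∈ Q, h w = g w := by
    intro w hw
    by_cases hwP : w ∈ P
    · simp only [hh, if_pos hwP]; exact hagree w ⟨hwP, hw⟩
    · simp only [hh, if_neg hwP]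
  apply colorable_of_goodOn_univ (f := h)
  intro u v _ _ hadj
  rcases hedge u v hadj with ⟨hu, hv⟩ | ⟨hu, hv⟩
  · simpa only [hh, if_pos hu, if_pos hv] using hf hu hv hadj
  · rw [hQ u hu, hQ v hv]; exact hg hu hv hadj

end Good

section Tree

variable {ι : Type} (T : SimpleGraph ι)

/-- the set of tree nodes on the `t₁` side of the edge `t₀t₁` -/
def treeSide (t₀ t₁ : ι) : Set ι :=
  {t | (T.deleteEdges {s(t₀, t₁)}).Reachable t t₁}

variable {T}

lemma sym2_ne {a b c d : ι} (h : ¬(a = c ∧ b = d)) (h' : ¬(a = d ∧ b = c)) :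
    s(a, b) ≠ s(c, d) := by
  rw [Ne, Sym2.eq_iff]; tauto

lemma del_comm (a b : ι) : T.deleteEdges {s(a, b)} = T.deleteEdges {s(b, a)} := by
  rw [Sym2.eq_swap]

lemma treeSide_self (t₀ t₁ : ι) : t₁ ∈ treeSide T t₀ t₁ := Reachable.refl t₁

lemma mem_treeSide_comm {t₀ t₁ t : ι} :
    t ∈ treeSide T t₁ t₀ ↔ (T.deleteEdges {s(t₀, t₁)}).Reachable t t₀ := by
  unfold treeSide
  rw [del_comm t₁ t₀]
  exact Iff.rfl

lemma reachable_end_of_mem_support {H : SimpleGraph ι} {a b u : ι}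
    (w : H.Walk a b) (hu : u ∈ w.support) : H.Reachable u b := by
  induction w with
  | nil =>
    rw [Walk.support_nil, List.mem_singleton] at hu
    exact hu ▸ Reachable.refl _
  | @cons c d e h p ih =>
    rw [Walk.support_cons, List.mem_cons] at hu
    rcases hu with rfl | hu'
    · exact ⟨Walk.cons h p⟩
    · exact ih hu'

lemma treeSide_or_aux (t₀ t₁ : ι) {a b : ι} (w : T.Walk a b) :
    (T.deleteEdges {s(t₀, t₁)}).Reachable a b ∨
      (T.deleteEdges {s(t₀, t₁)}).Reachable a t₀ ∨
      (T.deleteEdges {s(t₀, t₁)}).Reachable a t₁ := by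
  induction w with
  | nil => exact Or.inl (Reachable.refl _)
  | @cons a c b h p ih =>
    by_cases he : s(a, c) = s(t₀, t₁)
    · rw [Sym2.eq_iff] at he
      rcases he with ⟨rfl, rfl⟩ | ⟨rfl, rfl⟩
      · exact Or.inr (Or.inl (Reachable.refl _))
      · exact Or.inr (Or.inr (Reachable.refl _))
    · have hadj : (T.deleteEdges {s(t₀, t₁)}).Adj a c := by
        rw [deleteEdges_adj]; exact ⟨h, by simpa using he⟩
      rcases ih with hb | hb | hb
      · exact Or.inl (hadj.reachable.trans hb)
      · exact Or.inr (Or.inl (hadj.reachable.trans hb))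
      · exact Or.inr (Or.inr (hadj.reachable.trans hb))

lemma mem_treeSide_or (hconn : T.Connected) {t₀ t₁ : ι} (t : ι) :
    t ∈ treeSide T t₁ t₀ ∨ t ∈ treeSide T t₀ t₁ := by
  obtain ⟨w⟩ := hconn.preconnected t t₀
  rcases treeSide_or_aux t₀ t₁ w with h | h | h
  · exact Or.inl (mem_treeSide_comm.mpr h)
  · exact Or.inl (mem_treeSide_comm.mpr h)
  · exact Or.inr h

lemma treeSide_disjoint (htree : T.IsTree) {t₀ t₁ t : ι} (hadj : T.Adj t₀ t₁)
    (h0 : t ∈ treeSide T t₁ t₀) (h1 : t ∈ treeSide T t₀ t₁) : False := by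
  classical
  have h0' : (T.deleteEdges {s(t₀, t₁)}).Reachable t t₀ := mem_treeSide_comm.mp h0
  have hr : (T.deleteEdges {s(t₀, t₁)}).Reachable t₀ t₁ := h0'.symm.trans h1
  obtain ⟨p⟩ := hr
  let q : (T.deleteEdges {s(t₀, t₁)}).Path t₀ t₁ := p.toPath
  have hq : (q : (T.deleteEdges {s(t₀, t₁)}).Walk t₀ t₁).IsPath := q.isPath
  have hsub : ∀ e ∈ (q : (T.deleteEdges {s(t₀, t₁)}).Walk t₀ t₁).edges, e ∈ T.edgeSet := by
    intro e he
    have := Walk.edges_subset_edgeSet _ he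
    rw [edgeSet_deleteEdges] at this
    exact this.1
  set r := (q : (T.deleteEdges {s(t₀, t₁)}).Walk t₀ t₁).transfer T hsub with hrdef
  have hr2 : r.IsPath := hq.transfer _
  have hedge : s(t₁, t₀) ∉ r.edges := by
    rw [hrdef, Walk.edges_transfer]
    intro he
    have := Walk.edges_subset_edgeSet _ he
    rw [edgeSet_deleteEdges] at this
    exact this.2 (by rw [Sym2.eq_swap]; rfl)
  exact htree.IsAcyclic (Walk.cons hadj.symm r)
    ((Walk.cons_isCycle_iff r hadj.symm).mpr ⟨hr2, hedge⟩)

/-- everything on the `t₂`-side of `t₀t₂` is on the `t₀`-side of `t₀t₁` -/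
lemma treeSide_subset (htree : T.IsTree) {t₀ t₁ t₂ : ι}
    (h1 : T.Adj t₀ t₁) (h2 : T.Adj t₀ t₂) (hne : t₁ ≠ t₂) :
    treeSide T t₀ t₂ ⊆ treeSide T t₁ t₀ := by
  intro t ht
  obtain ⟨w⟩ := ht
  have key : s(t₀, t₁) ∉ w.edges := by
    intro he
    have ht1 : t₁ ∈ w.support := Walk.snd_mem_support_of_mem_edges w he
    have hm : t₁ ∈ treeSide T t₀ t₂ := reachable_end_of_mem_support w ht1
    have ht1' : t₁ ∈ treeSide T t₂ t₀ := by
      refine mem_treeSide_comm.mpr (Adj.reachable ?_)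
      rw [deleteEdges_adj]
      exact ⟨h1.symm, by
        rw [Set.mem_singleton_iff]
        exact sym2_ne (fun ⟨e1, _⟩ => T.ne_of_adj h1 e1.symm)
          (fun ⟨e1, _⟩ => hne e1)⟩
    exact treeSide_disjoint htree h2 ht1' hm
  have hsub : ∀ e ∈ w.edges, e ∈ (T.deleteEdges {s(t₀, t₁)}).edgeSet := by
    intro e he
    rw [edgeSet_deleteEdges]
    refine ⟨?_, ?_⟩
    · have := Walk.edges_subset_edgeSet w he
      rw [edgeSet_deleteEdges] at this
      exact this.1
    · intro hc
      rw [Set.mem_singleton_iff] at hc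
      exact key (hc ▸ he)
  have hadj : (T.deleteEdges {s(t₀, t₁)}).Adj t₂ t₀ := by
    rw [deleteEdges_adj]
    exact ⟨h2.symm, by
      rw [Set.mem_singleton_iff]
      exact sym2_ne (fun ⟨e1, _⟩ => T.ne_of_adj h2 e1.symm)
        (fun ⟨e1, _⟩ => hne e1.symm)⟩
  have hreach : (T.deleteEdges {s(t₀, t₁)}).Reachable t t₂ := ⟨w.transfer _ hsub⟩
  exact mem_treeSide_comm.mpr (hreach.trans hadj.reachable)

variable {V : Type} {G : SimpleGraph V} {W : ι → Set V}

/-- bags on opposite sides of a tree edge meet only inside the adhesion set -/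
lemma bags_separated (hdec : IsTreeDecomp G T W) {t₀ t₁ t t' : ι}
    (hadj : T.Adj t₀ t₁)
    (ht : t ∈ treeSide T t₁ t₀) (ht' : t' ∈ treeSide T t₀ t₁) :
    W t ∩ W t' ⊆ W t₀ ∩ W t₁ := by
  classical
  obtain ⟨htree, -, -, hpath⟩ := hdec
  set D := T.deleteEdges {s(t₀, t₁)} with hD
  have h1 : D.Reachable t t₀ := mem_treeSide_comm.mp ht
  have h2 : D.Reachable t₁ t' := ht'.symm
  obtain ⟨p₁⟩ := h1
  obtain ⟨p₂⟩ := h2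
  set q₁ := p₁.toPath with hq₁
  set q₂ := p₂.toPath with hq₂
  have hsub1 : ∀ e ∈ (q₁ : D.Walk t t₀).edges, e ∈ T.edgeSet := by
    intro e he
    have h := Walk.edges_subset_edgeSet _ he
    rw [hD, edgeSet_deleteEdges] at h
    exact h.1
  have hsub2 : ∀ e ∈ (q₂ : D.Walk t₁ t').edges, e ∈ T.edgeSet := by
    intro e he
    have h := Walk.edges_subset_edgeSet _ he
    rw [hD, edgeSet_deleteEdges] at h
    exact h.1
  set r₁ := (q₁ : D.Walk t t₀).transfer T hsub1 with hr₁
  set r₂ := (q₂ : D.Walk t₁ t').transfer T hsub2 with hr₂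
  have hside1 : ∀ u ∈ r₁.support, u ∈ treeSide T t₁ t₀ := by
    intro u hu
    rw [hr₁, Walk.support_transfer] at hu
    exact mem_treeSide_comm.mpr (reachable_end_of_mem_support _ hu)
  have hside2 : ∀ u ∈ r₂.support, u ∈ treeSide T t₀ t₁ := by
    intro u hu
    rw [hr₂, Walk.support_transfer] at hu
    exact (reachable_end_of_mem_support _ hu).trans ht'
  set w : T.Walk t t' := r₁.append (Walk.cons hadj r₂) with hw
  have hwsupp : w.support = r₁.support ++ r₂.support := by
    rw [hw, Walk.support_append, Walk.support_cons, List.tail_cons]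
  have hwpath : w.IsPath := by
    rw [Walk.isPath_def, hwsupp]
    refine List.Nodup.append ?_ ?_ ?_
    · exact (Walk.isPath_def _).mp ((q₁.isPath).transfer hsub1)
    · exact (Walk.isPath_def _).mp ((q₂.isPath).transfer hsub2)
    · intro u hu1 hu2
      exact treeSide_disjoint htree hadj (hside1 u hu1) (hside2 u hu2)
  have hm0 : t₀ ∈ w.support := by
    rw [hwsupp]
    exact List.mem_append_left _ (Walk.end_mem_support r₁)
  have hm1 : t₁ ∈ w.support := by
    rw [hwsupp]
    exact List.mem_append_right _ (Walk.start_mem_support r₂)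
  exact Set.subset_inter (hpath t t₀ t' w hwpath hm0) (hpath t t₁ t' w hwpath hm1)

end Tree

section Main
variable {V ι : Type} {G : SimpleGraph V} {T : SimpleGraph ι} {W : ι → Set V}

lemma glue_two {n : ℕ} (P Q : Set V) (x y : V)
    (hedge : ∀ u v, G.Adj u v → (u ∈ P ∧ v ∈ P) ∨ (u ∈ Q ∧ v ∈ Q))
    (hPQ : P ∩ Q ⊆ {x, y}) {f g : V → Fin n}
    (hf : GoodOn G P n f) (hg : GoodOn G Q n g)
    (htype : (f x = f y) ↔ (g x = g y)) : G.Colorable n := by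
  classical
  obtain ⟨π, hπx, hπy⟩ := exists_perm_pair (g x) (g y) (f x) (f y) htype.symm
  apply glue_goodOn hedge hf (hg.perm π)
  intro v hv
  rcases hPQ hv with rfl | rfl
  · exact hπx.symm
  · exact hπy.symm

lemma bag_edge_split (hdec : IsTreeDecomp G T W) (S₁ S₂ : Set ι)
    (hcov : ∀ t, t ∈ S₁ ∨ t ∈ S₂) : ∀ u v, G.Adj u v →
      (u ∈ ⋃ t ∈ S₁, W t ∧ v ∈ ⋃ t ∈ S₁, W t) ∨
      (u ∈ ⋃ t ∈ S₂, W t ∧ v ∈ ⋃ t ∈ S₂, W t) := by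
  intro u v hadj
  obtain ⟨t, hut, hvt⟩ := hdec.2.2.1 u v hadj
  rcases hcov t with ht | ht
  · exact Or.inl ⟨Set.mem_biUnion ht hut, Set.mem_biUnion ht hvt⟩
  · exact Or.inr ⟨Set.mem_biUnion ht hut, Set.mem_biUnion ht hvt⟩

lemma bag_inter_subset {S₁ S₂ : Set ι} {Z : Set V}
    (h : ∀ t ∈ S₁, ∀ t' ∈ S₂, W t ∩ W t' ⊆ Z) :
    (⋃ t ∈ S₁, W t) ∩ (⋃ t ∈ S₂, W t) ⊆ Z := by
  rintro v ⟨hv1, hv2⟩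
  obtain ⟨a, ha, hva⟩ := Set.mem_iUnion₂.mp hv1
  obtain ⟨b, hb, hvb⟩ := Set.mem_iUnion₂.mp hv2
  exact h a ha b hb ⟨hva, hvb⟩

lemma three_le_ncard_bag [Fintype V] {t : ι}
    (h : KConnected 3 (torso G T W t) ∨ IsCycleGraph (torso G T W t)) :
    3 ≤ (W t).ncard := by
  rcases h with h | h
  · have := h.1
    rw [Nat.card_coe_set_eq] at this
    omega
  · obtain ⟨v, c, hc, -, -⟩ := h
    letI : Fintype ↥(W t) := Fintype.ofFinite _
    have h1 : 3 ≤ c.length := hc.three_le_length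
    have h2 : c.support.tail.length = c.length := by
      rw [List.length_tail, Walk.length_support]
      omega
    have h3 : c.support.tail.length ≤ Fintype.card ↥(W t) :=
      hc.support_nodup.length_le_card
    have h4 : Fintype.card ↥(W t) = (W t).ncard := by
      rw [← Nat.card_eq_fintype_card, Nat.card_coe_set_eq]
    omega

lemma exists_private [Fintype V] {t : ι} {S : Set V}
    (h3 : 3 ≤ (W t).ncard) (hS : S.ncard = 2) : ∃ w ∈ W t, w ∉ S := by
  by_contra hcon
  push_neg at hcon
  have := Set.ncard_le_ncard hcon (Set.toFinite S)
  omega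

end Main

set_option maxHeartbeats 1000000 in
theorem stmt12 (k : ℕ) (hk : 4 ≤ k)
    (V : Type) [Fintype V] (G : SimpleGraph V) (hG : IsCritical k G)
    (ι : Type) (T : SimpleGraph ι) (W : ι → Set V)
    (hstd : IsStandardTreeDecomp G T W) :
    (∀ t₀ t₁ : ι, T.Adj t₀ t₁ →
      ∀ x ∈ W t₀ ∩ W t₁, ∀ y ∈ W t₀ ∩ W t₁, ¬ G.Adj x y) ∧
    (∀ t₀ t₁ t₂ : ι, T.Adj t₀ t₁ → T.Adj t₀ t₂ → t₁ ≠ t₂ →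
      W t₀ ∩ W t₁ ≠ W t₀ ∩ W t₂) := by
  classical
  obtain ⟨hdec, hinter, htor⟩ := hstd
  have htree : T.IsTree := hdec.1
  constructor
  · -- part (i)
    intro t₀ t₁ hadj x hx y hy hxy
    have hne : x ≠ y := G.ne_of_adj hxy
    have hS : W t₀ ∩ W t₁ = {x, y} := by
      refine (Set.eq_of_subset_of_ncard_le ?_ ?_ (Set.toFinite _)).symm
      · rintro v (rfl | rfl)
        exacts [hx, hy]
      · rw [hinter t₀ t₁ hadj, Set.ncard_pair hne]
    set A := treeSide T t₁ t₀ with hA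
    set B := treeSide T t₀ t₁ with hB
    have ht₀A : t₀ ∈ A := treeSide_self t₁ t₀
    have ht₁B : t₁ ∈ B := treeSide_self t₀ t₁
    set X := ⋃ t ∈ A, W t with hX
    set Y := ⋃ t ∈ B, W t with hY
    have hsep : ∀ t ∈ A, ∀ t' ∈ B, W t ∩ W t' ⊆ W t₀ ∩ W t₁ :=
      fun t ht t' ht' => bags_separated hdec hadj ht ht'
    -- private vertices
    obtain ⟨w₁, hw₁t, hw₁⟩ : ∃ w ∈ W t₁, w ∉ W t₀ ∩ W t₁ :=
      exists_private (three_le_ncard_bag (htor t₁)) (hinter t₀ t₁ hadj)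
    obtain ⟨w₀, hw₀t, hw₀⟩ : ∃ w ∈ W t₀, w ∉ W t₀ ∩ W t₁ :=
      exists_private (three_le_ncard_bag (htor t₀)) (hinter t₀ t₁ hadj)
    have hXne : X ≠ Set.univ := by
      intro hXu
      obtain ⟨a, ha, hwa⟩ := Set.mem_iUnion₂.mp (hXu ▸ Set.mem_univ w₁ : w₁ ∈ X)
      exact hw₁ (hsep a ha t₁ ht₁B ⟨hwa, hw₁t⟩)
    have hYne : Y ≠ Set.univ := by
      intro hYu
      obtain ⟨b, hb, hwb⟩ := Set.mem_iUnion₂.mp (hYu ▸ Set.mem_univ w₀ : w₀ ∈ Y)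
      exact hw₀ (hsep t₀ ht₀A b hb ⟨hw₀t, hwb⟩)
    obtain ⟨f, hf⟩ := hG.exists_goodOn hk X hXne
    obtain ⟨g, hg⟩ := hG.exists_goodOn hk Y hYne
    have hxX : x ∈ X := Set.mem_biUnion ht₀A hx.1
    have hyX : y ∈ X := Set.mem_biUnion ht₀A hy.1
    have hxY : x ∈ Y := Set.mem_biUnion ht₁B hx.2
    have hyY : y ∈ Y := Set.mem_biUnion ht₁B hy.2
    have hcol : G.Colorable (k - 1) := by
      refine glue_two X Y x y
        (bag_edge_split hdec A B (mem_treeSide_or htree.isConnected)) ?_ hf hg ?_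
      · exact (bag_inter_subset hsep).trans (hS ▸ subset_rfl)
      · constructor
        · intro h; exact absurd h (hf hxX hyX hxy)
        · intro h; exact absurd h (hg hxY hyY hxy)
    exact hG.1 hcol
  · -- part (ii)
    intro t₀ t₁ t₂ h1 h2 hne12 heq
    obtain ⟨x, y, hxyne, hSxy⟩ := Set.ncard_eq_two.mp (hinter t₀ t₁ h1)
    set A : Set ι := treeSide T t₁ t₀ ∩ treeSide T t₂ t₀ with hA
    set B₁ := treeSide T t₀ t₁ with hB₁
    set B₂ := treeSide T t₀ t₂ with hB₂
    have hB₂sub : B₂ ⊆ treeSide T t₁ t₀ := treeSide_subset htree h1 h2 hne12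
    have hB₁sub : B₁ ⊆ treeSide T t₂ t₀ := treeSide_subset htree h2 h1 hne12.symm
    have ht₀A : t₀ ∈ A := ⟨treeSide_self t₁ t₀, treeSide_self t₂ t₀⟩
    have ht₁B : t₁ ∈ B₁ := treeSide_self t₀ t₁
    have ht₂B : t₂ ∈ B₂ := treeSide_self t₀ t₂
    -- cover of tree nodes
    have hcov1 : ∀ t, t ∈ A ∪ B₁ ∨ t ∈ B₂ := by
      intro t
      by_cases hb2 : t ∈ B₂
      · exact Or.inr hb2
      · rcases mem_treeSide_or htree.isConnected (t₀ := t₀) (t₁ := t₂) t with ha2 | hb2'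
        · by_cases hb1 : t ∈ B₁
          · exact Or.inl (Or.inr hb1)
          · rcases mem_treeSide_or htree.isConnected (t₀ := t₀) (t₁ := t₁) t with ha1 | hb1'
            · exact Or.inl (Or.inl ⟨ha1, ha2⟩)
            · exact absurd hb1' hb1
        · exact absurd hb2' hb2
    have hcov2 : ∀ t, t ∈ A ∪ B₂ ∨ t ∈ B₁ := by
      intro t
      rcases hcov1 t with (h | h) | h
      · exact Or.inl (Or.inl h)
      · exact Or.inr h
      · exact Or.inl (Or.inr h)
    have hcov3 : ∀ t, t ∈ B₁ ∪ B₂ ∨ t ∈ A := by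
      intro t
      rcases hcov1 t with (h | h) | h
      · exact Or.inr h
      · exact Or.inl (Or.inl h)
      · exact Or.inl (Or.inr h)
    -- side containments for separation
    have hA1 : ∀ t ∈ A ∪ B₁, t ∈ treeSide T t₂ t₀ := by
      rintro t (ht | ht); exacts [ht.2, hB₁sub ht]
    have hA2 : ∀ t ∈ A ∪ B₂, t ∈ treeSide T t₁ t₀ := by
      rintro t (ht | ht); exacts [ht.1, hB₂sub ht]
    -- key separation facts
    have hsep1 : ∀ t ∈ A ∪ B₂, ∀ t' ∈ B₁, W t ∩ W t' ⊆ {x, y} := by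
      intro t ht t' ht'
      refine (bags_separated hdec h1 (hA2 t ht) ht').trans ?_
      rw [hSxy]
    have hsep2 : ∀ t ∈ A ∪ B₁, ∀ t' ∈ B₂, W t ∩ W t' ⊆ {x, y} := by
      intro t ht t' ht'
      refine (bags_separated hdec h2 (hA1 t ht) ht').trans ?_
      rw [← heq, hSxy]
    have hsep3 : ∀ t ∈ B₁ ∪ B₂, ∀ t' ∈ A, W t ∩ W t' ⊆ {x, y} := by
      rintro t (ht | ht) t' ht'
      · intro v hv
        exact hsep1 t' (Or.inl ht') t ht ⟨hv.2, hv.1⟩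
      · intro v hv
        exact hsep2 t' (Or.inl ht') t ht ⟨hv.2, hv.1⟩
    -- the three unions of bags
    set P01 := ⋃ t ∈ A ∪ B₁, W t with hP01
    set P02 := ⋃ t ∈ A ∪ B₂, W t with hP02
    set P12 := ⋃ t ∈ B₁ ∪ B₂, W t with hP12
    set Q1 := ⋃ t ∈ B₁, W t with hQ1
    set Q2 := ⋃ t ∈ B₂, W t with hQ2
    set QA := ⋃ t ∈ A, W t with hQA
    have hQ1sub : Q1 ⊆ P12 := Set.biUnion_subset_biUnion_left Set.subset_union_left
    have hQ2sub : Q2 ⊆ P12 := Set.biUnion_subset_biUnion_left Set.subset_union_right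
    -- x, y memberships
    have hx0 : x ∈ W t₀ := (hSxy ▸ (Set.mem_insert x {y}) : x ∈ W t₀ ∩ W t₁).1
    have hy0 : y ∈ W t₀ := (hSxy ▸ (Set.mem_insert_of_mem x rfl) : y ∈ W t₀ ∩ W t₁).1
    have hx1 : x ∈ W t₁ := (hSxy ▸ (Set.mem_insert x {y}) : x ∈ W t₀ ∩ W t₁).2
    have hy1 : y ∈ W t₁ := (hSxy ▸ (Set.mem_insert_of_mem x rfl) : y ∈ W t₀ ∩ W t₁).2
    have hS2xy : W t₀ ∩ W t₂ = {x, y} := by rw [← heq]; exact hSxy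
    have hx2 : x ∈ W t₂ := by
      have h : x ∈ W t₀ ∩ W t₂ := by rw [hS2xy]; exact Set.mem_insert x {y}
      exact h.2
    have hy2 : y ∈ W t₂ := by
      have h : y ∈ W t₀ ∩ W t₂ := by rw [hS2xy]; exact Set.mem_insert_of_mem x rfl
      exact h.2
    have hxP01 : x ∈ P01 := Set.mem_biUnion (Or.inl ht₀A) hx0
    have hyP01 : y ∈ P01 := Set.mem_biUnion (Or.inl ht₀A) hy0
    have hxP02 : x ∈ P02 := Set.mem_biUnion (Or.inl ht₀A) hx0
    have hyP02 : y ∈ P02 := Set.mem_biUnion (Or.inl ht₀A) hy0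
    have hxQ1 : x ∈ Q1 := Set.mem_biUnion ht₁B hx1
    have hyQ1 : y ∈ Q1 := Set.mem_biUnion ht₁B hy1
    have hxQ2 : x ∈ Q2 := Set.mem_biUnion ht₂B hx2
    have hyQ2 : y ∈ Q2 := Set.mem_biUnion ht₂B hy2
    -- private vertices make the three unions proper
    obtain ⟨w₀, hw₀t, hw₀⟩ : ∃ w ∈ W t₀, w ∉ ({x, y} : Set V) := by
      refine exists_private (three_le_ncard_bag (htor t₀)) ?_
      rw [Set.ncard_pair hxyne]
    obtain ⟨w₁, hw₁t, hw₁⟩ : ∃ w ∈ W t₁, w ∉ ({x, y} : Set V) := by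
      refine exists_private (three_le_ncard_bag (htor t₁)) ?_
      rw [Set.ncard_pair hxyne]
    obtain ⟨w₂, hw₂t, hw₂⟩ : ∃ w ∈ W t₂, w ∉ ({x, y} : Set V) := by
      refine exists_private (three_le_ncard_bag (htor t₂)) ?_
      rw [Set.ncard_pair hxyne]
    have hP01ne : P01 ≠ Set.univ := by
      intro hu
      obtain ⟨a, ha, hwa⟩ := Set.mem_iUnion₂.mp (hu ▸ Set.mem_univ w₂ : w₂ ∈ P01)
      exact hw₂ (hsep2 a ha t₂ ht₂B ⟨hwa, hw₂t⟩)
    have hP02ne : P02 ≠ Set.univ := by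
      intro hu
      obtain ⟨a, ha, hwa⟩ := Set.mem_iUnion₂.mp (hu ▸ Set.mem_univ w₁ : w₁ ∈ P02)
      exact hw₁ (hsep1 a ha t₁ ht₁B ⟨hwa, hw₁t⟩)
    have hP12ne : P12 ≠ Set.univ := by
      intro hu
      obtain ⟨a, ha, hwa⟩ := Set.mem_iUnion₂.mp (hu ▸ Set.mem_univ w₀ : w₀ ∈ P12)
      exact hw₀ (hsep3 a ha t₀ ht₀A ⟨hwa, hw₀t⟩)
    obtain ⟨f01, hf01⟩ := hG.exists_goodOn hk P01 hP01ne
    obtain ⟨f02, hf02⟩ := hG.exists_goodOn hk P02 hP02ne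
    obtain ⟨f12, hf12⟩ := hG.exists_goodOn hk P12 hP12ne
    -- three gluing scenarios
    have colA : (f01 x = f01 y ↔ f02 x = f02 y) → G.Colorable (k - 1) := by
      intro htype
      refine glue_two P01 Q2 x y (bag_edge_split hdec _ _ hcov1) ?_ hf01
        (hf02.mono (Set.biUnion_subset_biUnion_left Set.subset_union_right)) htype
      exact bag_inter_subset hsep2
    have colB : (f01 x = f01 y ↔ f12 x = f12 y) → G.Colorable (k - 1) := by
      intro htype
      refine glue_two P01 Q2 x y (bag_edge_split hdec _ _ hcov1) ?_ hf01
        (hf12.mono hQ2sub) htype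
      exact bag_inter_subset hsep2
    have colC : (f02 x = f02 y ↔ f12 x = f12 y) → G.Colorable (k - 1) := by
      intro htype
      refine glue_two P02 Q1 x y (bag_edge_split hdec _ _ hcov2) ?_ hf02
        (hf12.mono hQ1sub) htype
      exact bag_inter_subset hsep1
    apply hG.1
    by_cases p01 : f01 x = f01 y <;> by_cases p02 : f02 x = f02 y
    · exact colA (iff_of_true p01 p02)
    · by_cases p12 : f12 x = f12 y
      · exact colB (iff_of_true p01 p12)
      · exact colC (iff_of_false p02 p12)
    · by_cases p12 : f12 x = f12 y
      · exact colC (iff_of_true p02 p12)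
      · exact colB (iff_of_false p01 p12)
    · exact colA (iff_of_false p01 p02)
end

section
/- Let k ≥ 2 be an integer, let T be a finite tree, let r ∈ V(T), and assume that for every integer l ≥ 1 there are at most k^l vertices at distance exactly l from r in T. Let φ : V(T) → ℕ be a weight function with φ(r) = 0 and φ(t) ≠ 0 for at least one vertex t ∈ V(T). Then there exists a vertex t ∈ V(T), at distance exactly l from r in T for some l, such that φ(t) > 0 and 2l·log k + log φ(t) ≥ log(Σ_{v ∈ V(T)} φ(v)). -/
open SimpleGraph

theorem stmt14 (k : ℕ) (hk : 2 ≤ k)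
    (V : Type) [Fintype V] (T : SimpleGraph V) (hT : T.IsTree) (r : V)
    (hcount : ∀ l : ℕ, 1 ≤ l → {t : V | T.dist r t = l}.ncard ≤ k ^ l)
    (φ : V → ℕ) (hr : φ r = 0) (hex : ∃ t, φ t ≠ 0) :
    ∃ t : V, 0 < φ t ∧
      Real.log (∑ v : V, (φ v : ℝ)) ≤
        2 * (T.dist r t : ℝ) * Real.log k + Real.log (φ t) := by
  classical
  have hk0 : (0:ℝ) < (k:ℝ) := by
    have : (2:ℝ) ≤ (k:ℝ) := by exact_mod_cast hk
    linarith
  obtain ⟨t, -, hmax⟩ := Finset.exists_max_image Finset.univ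
    (fun v => k ^ (2 * T.dist r v) * φ v) ⟨r, Finset.mem_univ r⟩
  obtain ⟨u, hu⟩ := hex
  have hu' : 0 < φ u := Nat.pos_of_ne_zero hu
  have hNpos : 0 < k ^ (2 * T.dist r t) * φ t := by
    calc 0 < k ^ (2 * T.dist r u) * φ u := by positivity
    _ ≤ _ := hmax u (Finset.mem_univ u)
  have hφt : 0 < φ t := Nat.pos_of_ne_zero (fun h => by simp [h] at hNpos)
  refine ⟨t, hφt, ?_⟩
  set d := T.dist r t with hd
  set N : ℕ := k ^ (2 * d) * φ t with hN
  set x : ℝ := (k:ℝ)⁻¹ with hxdef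
  have hx0 : (0:ℝ) < x := by positivity
  have hx1 : x ≤ 1/2 := by
    rw [hxdef]
    rw [inv_le_comm₀ (by linarith) (by norm_num)]
    norm_num
    exact_mod_cast hk
  have hxlt1 : x < 1 := by linarith
  set D := Finset.image (fun v => T.dist r v) (Finset.univ : Finset V) with hD
  -- per-level bound
  have hfib : ∀ l ∈ D, ∑ v ∈ Finset.univ.filter (fun v => T.dist r v = l), (φ v : ℝ)
      ≤ if l = 0 then 0 else (N:ℝ) * x ^ l := by
    intro l hl
    by_cases h0 : l = 0
    · rw [if_pos h0]
      refine le_of_eq (Finset.sum_eq_zero ?_)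
      intro v hv
      rw [Finset.mem_filter] at hv
      have hv0 : T.dist r v = 0 := h0 ▸ hv.2
      have : r = v := by
        rcases SimpleGraph.dist_eq_zero_iff_eq_or_not_reachable.mp hv0 with h | h
        · exact h
        · exact absurd (hT.isConnected.preconnected r v) h
      rw [← this, hr]
      norm_num
    · rw [if_neg h0]
      have hcard : ((Finset.univ.filter (fun v => T.dist r v = l)).card : ℝ) ≤ (k:ℝ) ^ l := by
        have hset : {t : V | T.dist r t = l} =
            ↑(Finset.univ.filter (fun v => T.dist r v = l)) := by
          ext v; simp
        have := hcount l (Nat.one_le_iff_ne_zero.mpr h0)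
        rw [hset, Set.ncard_coe_finset] at this
        exact_mod_cast this
      have hterm : ∀ v ∈ Finset.univ.filter (fun v => T.dist r v = l),
          (φ v : ℝ) ≤ (N:ℝ) * x ^ (2 * l) := by
        intro v hv
        rw [Finset.mem_filter] at hv
        have h1 : ((k:ℝ)) ^ (2 * l) * (φ v : ℝ) ≤ (N:ℝ) := by
          have := hmax v (Finset.mem_univ v)
          rw [hv.2] at this
          exact_mod_cast this
        have hkl : (0:ℝ) < (k:ℝ) ^ (2 * l) := by positivity
        rw [mul_comm] at h1
        have h2 := (le_div_iff₀ hkl).mpr h1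
        rw [div_eq_mul_inv, ← inv_pow] at h2
        exact h2
      calc ∑ v ∈ Finset.univ.filter (fun v => T.dist r v = l), (φ v : ℝ)
          ≤ (Finset.univ.filter (fun v => T.dist r v = l)).card • ((N:ℝ) * x ^ (2 * l)) :=
            Finset.sum_le_card_nsmul _ _ _ hterm
        _ = ((Finset.univ.filter (fun v => T.dist r v = l)).card : ℝ) * ((N:ℝ) * x ^ (2 * l)) := by
            rw [nsmul_eq_mul]
        _ ≤ (k:ℝ) ^ l * ((N:ℝ) * x ^ (2 * l)) := by
            apply mul_le_mul_of_nonneg_right hcard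
            positivity
        _ = (N:ℝ) * x ^ l := by
            have hkx : (k:ℝ) ^ l * x ^ l = 1 := by
              rw [hxdef, ← mul_pow, mul_inv_cancel₀ (ne_of_gt hk0), one_pow]
            have : (2:ℕ) * l = l + l := by ring
            rw [this, pow_add]
            calc (k:ℝ) ^ l * ((N:ℝ) * (x ^ l * x ^ l))
                = ((k:ℝ) ^ l * x ^ l) * ((N:ℝ) * x ^ l) := by ring
              _ = (N:ℝ) * x ^ l := by rw [hkx, one_mul]
  -- collect
  have hsum : ∑ v : V, (φ v : ℝ) ≤ (N:ℝ) * ∑ l ∈ D.erase 0, x ^ l := by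
    rw [← Finset.sum_fiberwise_of_maps_to
      (fun v _ => Finset.mem_image_of_mem (fun v => T.dist r v) (Finset.mem_univ v))
      (fun v => (φ v : ℝ))]
    calc ∑ l ∈ D, ∑ v ∈ Finset.univ.filter (fun v => T.dist r v = l), (φ v : ℝ)
        ≤ ∑ l ∈ D, (if l = 0 then 0 else (N:ℝ) * x ^ l) := Finset.sum_le_sum hfib
      _ = ∑ l ∈ D.erase 0, (N:ℝ) * x ^ l := by
          rw [← Finset.filter_ne' D 0, Finset.sum_filter]
          exact Finset.sum_congr rfl fun l _ => by by_cases h : l = 0 <;> simp [h]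
      _ = (N:ℝ) * ∑ l ∈ D.erase 0, x ^ l := by rw [Finset.mul_sum]
  -- geometric series bound
  have hgeo : ∑ l ∈ D.erase 0, x ^ l ≤ 1 := by
    set M := D.sup id + 1 with hM
    have hsub : D.erase 0 ⊆ (Finset.range M).erase 0 := by
      intro l hl
      rw [Finset.mem_erase] at hl ⊢
      refine ⟨hl.1, Finset.mem_range.mpr (Nat.lt_succ_of_le ?_)⟩
      exact Finset.le_sup (f := id) hl.2
    have hsummable : Summable (fun n : ℕ => x ^ n) :=
      summable_geometric_of_lt_one hx0.le hxlt1
    calc ∑ l ∈ D.erase 0, x ^ l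
        ≤ ∑ l ∈ (Finset.range M).erase 0, x ^ l :=
          Finset.sum_le_sum_of_subset_of_nonneg hsub (fun i _ _ => by positivity)
      _ = (∑ l ∈ Finset.range M, x ^ l) - x ^ 0 :=
          Finset.sum_erase_eq_sub (Finset.mem_range.mpr (Nat.succ_pos _))
      _ ≤ (1 - x)⁻¹ - 1 := by
          have h1 : ∑ l ∈ Finset.range M, x ^ l ≤ (1 - x)⁻¹ := by
            rw [← tsum_geometric_of_lt_one hx0.le hxlt1]
            exact Summable.sum_le_tsum _ (fun i _ => by positivity) hsummable
          simp only [pow_zero]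
          linarith
      _ ≤ 1 := by
          have h2 : (1:ℝ)/2 ≤ 1 - x := by linarith
          have h3 : (1 - x)⁻¹ ≤ ((1:ℝ)/2)⁻¹ := by
            apply inv_anti₀ (by norm_num) h2
          norm_num at h3
          linarith
  have hSN : ∑ v : V, (φ v : ℝ) ≤ (N:ℝ) := by
    calc ∑ v : V, (φ v : ℝ) ≤ (N:ℝ) * ∑ l ∈ D.erase 0, x ^ l := hsum
      _ ≤ (N:ℝ) * 1 := by
          apply mul_le_mul_of_nonneg_left hgeo (by positivity)
      _ = (N:ℝ) := mul_one _
  have hSpos : 0 < ∑ v : V, (φ v : ℝ) :=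
    Finset.sum_pos' (fun i _ => by positivity)
      ⟨u, Finset.mem_univ u, by exact_mod_cast hu'⟩
  have hlog : Real.log (∑ v : V, (φ v : ℝ)) ≤ Real.log (N:ℝ) :=
    Real.log_le_log hSpos hSN
  have hNcast : (N:ℝ) = (k:ℝ) ^ (2 * d) * (φ t : ℝ) := by
    rw [hN]; push_cast; ring
  rw [hNcast, Real.log_mul (by positivity) (by positivity), Real.log_pow] at hlog
  have : ((2 * d : ℕ) : ℝ) = 2 * (d : ℝ) := by push_cast; ring
  rw [this] at hlog
  exact hlog
end
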